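/- arXiv:1507.04167 — 4 statements merged into one kernel-verified Lean document; each statement's English description precedes it below -/
import Mathlib

section
/- Suppose ≽ satisfies A1 (weak order), weak separability (A2), A3, A4, restricted solvability (A8), the Archimedean axiom (A9), and order density, and suppose both coordinates are essential on SE and on NW. Let SE* = ⋃_{z ∈ Θ \ SE_ext} SE(z) and NW* = ⋃_{z ∈ Θ \ NW_ext} NW(z), and let D₁ = {a ∈ X₁ : (∃p ∈ X₂, ap ∈ SE*) and (∃q ∈ X₂, aq ∈ NW*)}. Suppose (V₁ˢ,V₂ˢ) additively represents ≽ on SE(z) for every z ∈ Θ \ SE_ext, and (V₁ⁿ,V₂ⁿ) additively represents ≽ on NW(z) for every z ∈ Θ \ NW_ext. Suppose r⁰, r¹ ∈ D₁ satisfy r¹ ≽₁ r⁰ and not r⁰ ≽₁ r¹, and the normalizations V₁ˢ(r⁰) = V₁ⁿ(r⁰) = 0 and V₁ˢ(r¹) = V₁ⁿ(r¹) = 1 hold. Then V₁ˢ(a) = V₁ⁿ(a) for every a ∈ D₁. -/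
open Set
open scoped Classical

section ChoquetAxioms

variable {X₁ X₂ : Type*}

/-- Asymmetric (strict) part of a relation. -/
def SP (R : X₁ × X₂ → X₁ × X₂ → Prop) (x y : X₁ × X₂) : Prop := R x y ∧ ¬ R y x

/-- Symmetric (indifference) part of a relation. -/
def IP (R : X₁ × X₂ → X₁ × X₂ → Prop) (x y : X₁ × X₂) : Prop := R x y ∧ R y x

/-- Triple cancellation on a set `A`. -/
def TCancel (R : X₁ × X₂ → X₁ × X₂ → Prop) (A : Set (X₁ × X₂)) : Prop :=
  ∀ a b c d : X₁, ∀ p q r s : X₂,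
    (a,p) ∈ A → (b,q) ∈ A → (a,r) ∈ A → (b,s) ∈ A →
    (c,p) ∈ A → (d,q) ∈ A → (c,r) ∈ A → (d,s) ∈ A →
    R (b,q) (a,p) → R (a,r) (b,s) → R (c,p) (d,q) → R (c,r) (d,s)

/-- A1: weak order (complete and transitive). -/
def A1 (R : X₁ × X₂ → X₁ × X₂ → Prop) : Prop :=
  (∀ x y, R x y ∨ R y x) ∧ (∀ x y z, R x y → R y z → R x z)

/-- A2: weak separability. -/
def A2 (R : X₁ × X₂ → X₁ × X₂ → Prop) : Prop :=
  (∀ a b : X₁, ∀ p : X₂, SP R (a,p) (b,p) → ∀ q : X₂, R (a,q) (b,q)) ∧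
  (∀ p q : X₂, ∀ a : X₁, SP R (a,p) (a,q) → ∀ b : X₁, R (b,p) (b,q))

/-- Induced order on the first coordinate. -/
def Ge1 (R : X₁ × X₂ → X₁ × X₂ → Prop) (a b : X₁) : Prop := ∀ p : X₂, R (a,p) (b,p)

/-- Induced order on the second coordinate. -/
def Ge2 (R : X₁ × X₂ → X₁ × X₂ → Prop) (p q : X₂) : Prop := ∀ a : X₁, R (a,p) (a,q)

def Max1 (R : X₁ × X₂ → X₁ × X₂ → Prop) (a : X₁) : Prop := ∀ b : X₁, Ge1 R a b
def Min1 (R : X₁ × X₂ → X₁ × X₂ → Prop) (a : X₁) : Prop := ∀ b : X₁, Ge1 R b a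
def Max2 (R : X₁ × X₂ → X₁ × X₂ → Prop) (p : X₂) : Prop := ∀ q : X₂, Ge2 R p q
def Min2 (R : X₁ × X₂ → X₁ × X₂ → Prop) (p : X₂) : Prop := ∀ q : X₂, Ge2 R q p

/-- The south-east rectangular cone at `z`. -/
def SEz (R : X₁ × X₂ → X₁ × X₂ → Prop) (z : X₁ × X₂) : Set (X₁ × X₂) :=
  {x | Ge1 R x.1 z.1 ∧ Ge2 R z.2 x.2}

/-- The north-west rectangular cone at `z`. -/
def NWz (R : X₁ × X₂ → X₁ × X₂ → Prop) (z : X₁ × X₂) : Set (X₁ × X₂) :=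
  {x | Ge2 R x.2 z.2 ∧ Ge1 R z.1 x.1}

/-- A3: at every point, triple cancellation holds on `SEz z` or on `NWz z`. -/
def A3 (R : X₁ × X₂ → X₁ × X₂ → Prop) : Prop :=
  ∀ z : X₁ × X₂, TCancel R (SEz R z) ∨ TCancel R (NWz R z)

/-- The region SE. -/
def SEreg (R : X₁ × X₂ → X₁ × X₂ → Prop) : Set (X₁ × X₂) :=
  {x | (∃ z : X₁ × X₂, ¬ Max1 R z.1 ∧ ¬ Min2 R z.2 ∧ TCancel R (SEz R z) ∧ x ∈ SEz R z) ∨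
       ((Max1 R x.1 ∨ Min2 R x.2) ∧ ∀ y ∈ SEz R x, y ≠ x → ¬ TCancel R (NWz R y))}

/-- The region NW. -/
def NWreg (R : X₁ × X₂ → X₁ × X₂ → Prop) : Set (X₁ × X₂) :=
  {x | (∃ z : X₁ × X₂, ¬ Min1 R z.1 ∧ ¬ Max2 R z.2 ∧ TCancel R (NWz R z) ∧ x ∈ NWz R z) ∨
       ((Min1 R x.1 ∨ Max2 R x.2) ∧ ∀ y ∈ NWz R x, y ≠ x → ¬ TCancel R (SEz R y))}

/-- Θ = SE ∩ NW. -/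
def Theta (R : X₁ × X₂ → X₁ × X₂ → Prop) : Set (X₁ × X₂) := SEreg R ∩ NWreg R

/-- Extreme points of SE. -/
def SEext (R : X₁ × X₂ → X₁ × X₂ → Prop) : Set (X₁ × X₂) :=
  {x | x ∈ Theta R ∧ (Min2 R x.2 ∨ Max1 R x.1)}

/-- Extreme points of NW. -/
def NWext (R : X₁ × X₂ → X₁ × X₂ → Prop) : Set (X₁ × X₂) :=
  {x | x ∈ Theta R ∧ (Min1 R x.1 ∨ Max2 R x.2)}

/-- Coordinate 1 is essential on `A`. -/
def Ess1 (R : X₁ × X₂ → X₁ × X₂ → Prop) (A : Set (X₁ × X₂)) : Prop :=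
  ∃ a b : X₁, ∃ p : X₂, (a,p) ∈ A ∧ (b,p) ∈ A ∧ SP R (a,p) (b,p)

/-- Coordinate 2 is essential on `A`. -/
def Ess2 (R : X₁ × X₂ → X₁ × X₂ → Prop) (A : Set (X₁ × X₂)) : Prop :=
  ∃ p q : X₂, ∃ a : X₁, (a,p) ∈ A ∧ (a,q) ∈ A ∧ SP R (a,p) (a,q)

/-- Four points all belonging to a set. -/
def In4 (A : Set (X₁ × X₂)) (w x y z : X₁ × X₂) : Prop :=
  w ∈ A ∧ x ∈ A ∧ y ∈ A ∧ z ∈ A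

/-- A4. -/
def A4 (R : X₁ × X₂ → X₁ × X₂ → Prop) : Prop :=
  ∀ a b c d : X₁, ∀ p q r s : X₂,
    ((In4 (NWreg R) (a,p) (b,q) (a,r) (b,s) ∧ In4 (NWreg R) (c,p) (d,q) (c,r) (d,s)) ∨
     (In4 (SEreg R) (a,p) (b,q) (a,r) (b,s) ∧ In4 (SEreg R) (c,p) (d,q) (c,r) (d,s)) ∨
     (In4 (NWreg R) (a,p) (b,q) (a,r) (b,s) ∧ Ess2 R (NWreg R) ∧
        In4 (SEreg R) (c,p) (d,q) (c,r) (d,s)) ∨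
     (In4 (SEreg R) (a,p) (b,q) (a,r) (b,s) ∧ Ess2 R (SEreg R) ∧
        In4 (NWreg R) (c,p) (d,q) (c,r) (d,s)) ∨
     (In4 (NWreg R) (a,p) (b,q) (c,p) (d,q) ∧ Ess1 R (NWreg R) ∧
        In4 (SEreg R) (a,r) (b,s) (c,r) (d,s)) ∨
     (In4 (SEreg R) (a,p) (b,q) (c,p) (d,q) ∧ Ess1 R (SEreg R) ∧
        In4 (NWreg R) (a,r) (b,s) (c,r) (d,s))) →
    R (b,q) (a,p) → R (a,r) (b,s) → R (c,p) (d,q) → R (c,r) (d,s)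

/-- One half of A5 (stated for the given coordinate order). -/
def A5half (R : X₁ × X₂ → X₁ × X₂ → Prop) : Prop :=
  ∀ a b c d e g x₀ x₁ : X₁, ∀ p q y₀ y₁ πa πb πc πd : X₂,
    ((In4 (NWreg R) (a,p) (b,q) (c,p) (d,q) ∧ Ess1 R (NWreg R)) ∨
     (In4 (SEreg R) (a,p) (b,q) (c,p) (d,q) ∧ Ess1 R (SEreg R))) →
    (In4 (NWreg R) (a,y₀) (b,y₀) (c,y₁) (d,y₁) ∨
     In4 (SEreg R) (a,y₀) (b,y₀) (c,y₁) (d,y₁)) →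
    ((In4 (NWreg R) (x₀,πa) (x₀,πb) (x₁,πc) (x₁,πd) ∧ Ess2 R (NWreg R)) ∨
     (In4 (SEreg R) (x₀,πa) (x₀,πb) (x₁,πc) (x₁,πd) ∧ Ess2 R (SEreg R))) →
    (In4 (NWreg R) (e,πa) (g,πb) (e,πc) (g,πd) ∨
     In4 (SEreg R) (e,πa) (g,πb) (e,πc) (g,πd)) →
    R (b,q) (a,p) → R (c,p) (d,q) →
    IP R (a,y₀) (x₀,πa) → IP R (b,y₀) (x₀,πb) →
    IP R (c,y₁) (x₁,πc) → IP R (d,y₁) (x₁,πd) →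
    R (e,πa) (g,πb) → R (e,πc) (g,πd)

/-- The relation with the roles of the two coordinates exchanged. -/
def swapRel (R : X₁ × X₂ → X₁ × X₂ → Prop) : X₂ × X₁ → X₂ × X₁ → Prop :=
  fun x y => R (x.2, x.1) (y.2, y.1)

/-- A5 : the condition together with its symmetric (coordinate-exchanged) version. -/
def A5 (R : X₁ × X₂ → X₁ × X₂ → Prop) : Prop :=
  A5half R ∧ A5half (swapRel R)

/-- A6 : bi-independence. -/
def A6 (R : X₁ × X₂ → X₁ × X₂ → Prop) : Prop :=
  (∀ a b c d : X₁, ∀ p : X₂,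
    (In4 (SEreg R) (a,p) (b,p) (c,p) (d,p) ∨ In4 (NWreg R) (a,p) (b,p) (c,p) (d,p)) →
    SP R (a,p) (b,p) → (∃ q : X₂, SP R (c,q) (d,q)) → SP R (c,p) (d,p)) ∧
  (∀ p q r s : X₂, ∀ a : X₁,
    (In4 (SEreg R) (a,p) (a,q) (a,r) (a,s) ∨ In4 (NWreg R) (a,p) (a,q) (a,r) (a,s)) →
    SP R (a,p) (a,q) → (∃ b : X₁, SP R (b,r) (b,s)) → SP R (a,r) (a,s))

/-- A7 : both coordinates are essential on X. -/
def A7 (R : X₁ × X₂ → X₁ × X₂ → Prop) : Prop :=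
  Ess1 R Set.univ ∧ Ess2 R Set.univ

/-- A8 : restricted solvability. -/
def A8 (R : X₁ × X₂ → X₁ × X₂ → Prop) : Prop :=
  (∀ a : X₁, ∀ p r : X₂, ∀ y : X₁ × X₂,
    R (a,p) y → R y (a,r) → ∃ b : X₂, IP R (a,b) y) ∧
  (∀ p : X₂, ∀ a c : X₁, ∀ y : X₁ × X₂,
    R (a,p) y → R y (c,p) → ∃ b : X₁, IP R (b,p) y)

/-- `S` is an interval of integers. -/
def IsIntervalZ (S : Set ℤ) : Prop :=
  ∀ i j k : ℤ, i ≤ j → j ≤ k → i ∈ S → k ∈ S → j ∈ S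

/-- Standard sequence on X₁. -/
def StdSeq1 (R : X₁ × X₂ → X₁ × X₂ → Prop) (S : Set ℤ) (g : ℤ → X₁) (y₀ y₁ : X₂) : Prop :=
  IsIntervalZ S ∧ ¬ (Ge2 R y₀ y₁ ∧ Ge2 R y₁ y₀) ∧
  ∀ i, i ∈ S → (i+1) ∈ S → IP R (g i, y₀) (g (i+1), y₁)

def BoundedSeq1 (R : X₁ × X₂ → X₁ × X₂ → Prop) (S : Set ℤ) (g : ℤ → X₁) (y₀ : X₂) : Prop :=
  ∃ u v : X₁ × X₂, ∀ i ∈ S, R u (g i, y₀) ∧ R (g i, y₀) v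

/-- Standard sequence on X₂. -/
def StdSeq2 (R : X₁ × X₂ → X₁ × X₂ → Prop) (S : Set ℤ) (h : ℤ → X₂) (x₀ x₁ : X₁) : Prop :=
  IsIntervalZ S ∧ ¬ (Ge1 R x₀ x₁ ∧ Ge1 R x₁ x₀) ∧
  ∀ i, i ∈ S → (i+1) ∈ S → IP R (x₀, h i) (x₁, h (i+1))

def BoundedSeq2 (R : X₁ × X₂ → X₁ × X₂ → Prop) (S : Set ℤ) (h : ℤ → X₂) (x₀ : X₁) : Prop :=
  ∃ u v : X₁ × X₂, ∀ i ∈ S, R u (x₀, h i) ∧ R (x₀, h i) v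

/-- A9 : Archimedean axiom. -/
def A9 (R : X₁ × X₂ → X₁ × X₂ → Prop) : Prop :=
  (∀ z ∈ NWreg R, ∀ (S : Set ℤ) (g : ℤ → X₁) (y₀ y₁ : X₂),
    StdSeq1 R S g y₀ y₁ → BoundedSeq1 R S g y₀ →
    (∀ i ∈ S, (g i, y₀) ∈ NWz R z ∧ (g i, y₁) ∈ NWz R z) → S.Finite) ∧
  (∀ z ∈ SEreg R, ∀ (S : Set ℤ) (g : ℤ → X₁) (y₀ y₁ : X₂),
    StdSeq1 R S g y₀ y₁ → BoundedSeq1 R S g y₀ →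
    (∀ i ∈ S, (g i, y₀) ∈ SEz R z ∧ (g i, y₁) ∈ SEz R z) → S.Finite) ∧
  (∀ z ∈ NWreg R, ∀ (S : Set ℤ) (h : ℤ → X₂) (x₀ x₁ : X₁),
    StdSeq2 R S h x₀ x₁ → BoundedSeq2 R S h x₀ →
    (∀ i ∈ S, (x₀, h i) ∈ NWz R z ∧ (x₁, h i) ∈ NWz R z) → S.Finite) ∧
  (∀ z ∈ SEreg R, ∀ (S : Set ℤ) (h : ℤ → X₂) (x₀ x₁ : X₁),
    StdSeq2 R S h x₀ x₁ → BoundedSeq2 R S h x₀ →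
    (∀ i ∈ S, (x₀, h i) ∈ SEz R z ∧ (x₁, h i) ∈ SEz R z) → S.Finite)

/-- Structural assumption. -/
def Structural (R : X₁ × X₂ → X₁ × X₂ → Prop) : Prop :=
  (∀ a b : X₁, a ≠ b → ¬ ∀ p : X₂, IP R (a,p) (b,p)) ∧
  (∀ p q : X₂, p ≠ q → ¬ ∀ a : X₁, IP R (a,p) (a,q))

/-- Order density. -/
def OrderDense (R : X₁ × X₂ → X₁ × X₂ → Prop) : Prop :=
  ∀ x y : X₁ × X₂, SP R x y → ∃ z : X₁ × X₂, SP R x z ∧ SP R z y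

/-- Closedness of SE and NW. -/
def Closedness (R : X₁ × X₂ → X₁ × X₂ → Prop) : Prop :=
  (∀ a b : X₁, ∀ p : X₂, (a,p) ∉ NWreg R → (b,p) ∉ SEreg R →
    ∃ c : X₁, (c,p) ∈ Theta R) ∧
  (∀ a : X₁, ∀ p q : X₂, (a,p) ∉ NWreg R → (a,q) ∉ SEreg R →
    ∃ r : X₂, (a,r) ∈ Theta R)

/-- A capacity on the two-element set (coordinate 1 ↦ `0`, coordinate 2 ↦ `1`). -/
structure Capacity where
  ν : Set (Fin 2) → ℝ
  empty' : ν ∅ = 0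
  mono' : ∀ A B : Set (Fin 2), A ⊆ B → ν A ≤ ν B
  norm' : ν Set.univ = 1

/-- Two-point Choquet integral. -/
noncomputable def Choq (c : Capacity) (t₁ t₂ : ℝ) : ℝ :=
  if t₂ ≤ t₁ then c.ν {0} * t₁ + (1 - c.ν {0}) * t₂
  else (1 - c.ν {1}) * t₁ + c.ν {1} * t₂

/-- `ν` together with `(f₁, f₂)` represents `R`. -/
def Represents (c : Capacity) (f₁ : X₁ → ℝ) (f₂ : X₂ → ℝ)
    (R : X₁ × X₂ → X₁ × X₂ → Prop) : Prop :=
  ∀ x y : X₁ × X₂, R x y ↔ Choq c (f₁ y.1) (f₂ y.2) ≤ Choq c (f₁ x.1) (f₂ x.2)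

/-- `(V₁, V₂)` additively represents `R` on `A`. -/
def AddRep (R : X₁ × X₂ → X₁ × X₂ → Prop) (V₁ : X₁ → ℝ) (V₂ : X₂ → ℝ)
    (A : Set (X₁ × X₂)) : Prop :=
  ∀ x ∈ A, ∀ y ∈ A, (R x y ↔ V₁ y.1 + V₂ y.2 ≤ V₁ x.1 + V₂ x.2)

/-- `Φ` represents `R` on `A`. -/
def RepOn (R : X₁ × X₂ → X₁ × X₂ → Prop) (Φ : X₁ × X₂ → ℝ) (A : Set (X₁ × X₂)) : Prop :=
  ∀ x ∈ A, ∀ y ∈ A, (R x y ↔ Φ y ≤ Φ x)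


/-- `S` union of non-extreme SE cones. -/
def SEstar (R : X₁ × X₂ → X₁ × X₂ → Prop) : Set (X₁ × X₂) :=
  ⋃ z ∈ Theta R \ SEext R, SEz R z

/-- Union of non-extreme NW cones. -/
def NWstar (R : X₁ × X₂ → X₁ × X₂ → Prop) : Set (X₁ × X₂) :=
  ⋃ z ∈ Theta R \ NWext R, NWz R z

/-- First coordinates appearing both in `SEstar` and `NWstar`. -/
def D1 (R : X₁ × X₂ → X₁ × X₂ → Prop) : Set X₁ :=
  {a | (∃ p : X₂, (a,p) ∈ SEstar R) ∧ (∃ q : X₂, (a,q) ∈ NWstar R)}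

/-- Second coordinates appearing both in `SEstar` and `NWstar`. -/
def D2 (R : X₁ × X₂ → X₁ × X₂ → Prop) : Set X₂ :=
  {p | (∃ a : X₁, (a,p) ∈ SEstar R) ∧ (∃ b : X₁, (b,p) ∈ NWstar R)}

end ChoquetAxioms

section AuxLemmas

variable {X₁ X₂ : Type*} {R : X₁ × X₂ → X₁ × X₂ → Prop}

lemma rrefl (h1 : A1 R) (x : X₁ × X₂) : R x x := (h1.1 x x).elim id id

lemma ip_symm {x y : X₁ × X₂} (h : IP R x y) : IP R y x := ⟨h.2, h.1⟩

lemma sp_ip_trans (h1 : A1 R) {x y z : X₁ × X₂} (hxy : SP R x y) (hyz : IP R y z) :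
    SP R x z :=
  ⟨h1.2 _ _ _ hxy.1 hyz.1, fun h => hxy.2 (h1.2 _ _ _ hyz.1 h)⟩

lemma ip_sp_trans (h1 : A1 R) {x y z : X₁ × X₂} (hxy : IP R x y) (hyz : SP R y z) :
    SP R x z :=
  ⟨h1.2 _ _ _ hxy.1 hyz.1, fun h => hyz.2 (h1.2 _ _ _ h hxy.1)⟩

lemma ge1_refl (h1 : A1 R) (a : X₁) : Ge1 R a a := fun p => rrefl h1 (a, p)

lemma ge2_refl (h1 : A1 R) (p : X₂) : Ge2 R p p := fun a => rrefl h1 (a, p)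

lemma ge1_trans (h1 : A1 R) {a b c : X₁} (hab : Ge1 R a b) (hbc : Ge1 R b c) :
    Ge1 R a c := fun p => h1.2 _ _ _ (hab p) (hbc p)

lemma ge2_trans (h1 : A1 R) {p q r : X₂} (hpq : Ge2 R p q) (hqr : Ge2 R q r) :
    Ge2 R p r := fun a => h1.2 _ _ _ (hpq a) (hqr a)

lemma exists_sp1_of_not_ge1 (h1 : A1 R) {a b : X₁} (h : ¬ Ge1 R a b) :
    ∃ p, SP R (b, p) (a, p) := by
  rw [Ge1] at h; push_neg at h
  obtain ⟨p, hp⟩ := h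
  exact ⟨p, (h1.1 (b,p) (a,p)).elim id (fun h' => absurd h' hp), hp⟩

lemma exists_sp2_of_not_ge2 (h1 : A1 R) {p q : X₂} (h : ¬ Ge2 R p q) :
    ∃ a, SP R (a, q) (a, p) := by
  rw [Ge2] at h; push_neg at h
  obtain ⟨a, ha⟩ := h
  exact ⟨a, (h1.1 (a,q) (a,p)).elim id (fun h' => absurd h' ha), ha⟩

lemma ge1_of_not_ge1 (h1 : A1 R) (h2 : A2 R) {a b : X₁} (h : ¬ Ge1 R a b) :
    Ge1 R b a := by
  obtain ⟨p, hp⟩ := exists_sp1_of_not_ge1 h1 h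
  exact fun q => h2.1 b a p hp q

lemma ge2_of_not_ge2 (h1 : A1 R) (h2 : A2 R) {p q : X₂} (h : ¬ Ge2 R p q) :
    Ge2 R q p := by
  obtain ⟨a, ha⟩ := exists_sp2_of_not_ge2 h1 h
  exact fun b => h2.2 q p a ha b

lemma ge1_total (h1 : A1 R) (h2 : A2 R) (a b : X₁) : Ge1 R a b ∨ Ge1 R b a := by
  by_cases h : Ge1 R a b
  · exact Or.inl h
  · exact Or.inr (ge1_of_not_ge1 h1 h2 h)

/-- If `z` lies in `Θ` but is not SE-extreme, then its SE cone is inside the SE region. -/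
lemma SEz_sub_SEreg {z : X₁ × X₂} (hz : z ∈ Theta R \ SEext R) (h1 : A1 R) :
    SEz R z ⊆ SEreg R := by
  have hzT : z ∈ Theta R := hz.1
  have hne : ¬ (Min2 R z.2 ∨ Max1 R z.1) := fun h => hz.2 ⟨hzT, h⟩
  have hzSE : z ∈ SEreg R := hzT.1
  rcases hzSE with ⟨z', hz'1, hz'2, hz'3, hz'4⟩ | ⟨hmax, _⟩
  · intro x hx
    exact Or.inl ⟨z', hz'1, hz'2, hz'3,
      ge1_trans h1 hx.1 hz'4.1, ge2_trans h1 hz'4.2 hx.2⟩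
  · exact absurd (hmax.elim (fun h => Or.inr h) (fun h => Or.inl h)) hne

lemma NWz_sub_NWreg {z : X₁ × X₂} (hz : z ∈ Theta R \ NWext R) (h1 : A1 R) :
    NWz R z ⊆ NWreg R := by
  have hzT : z ∈ Theta R := hz.1
  have hne : ¬ (Min1 R z.1 ∨ Max2 R z.2) := fun h => hz.2 ⟨hzT, h⟩
  have hzNW : z ∈ NWreg R := hzT.2
  rcases hzNW with ⟨z', hz'1, hz'2, hz'3, hz'4⟩ | ⟨hmax, _⟩
  · intro x hx
    exact Or.inl ⟨z', hz'1, hz'2, hz'3,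
      ge2_trans h1 hx.1 hz'4.1, ge1_trans h1 hz'4.2 hx.2⟩
  · exact absurd hmax hne

/-- Strictness on the first coordinate inside an NW cone, from the Archimedean axiom. -/
lemma eq1_of_ip_NW (h1 : A1 R) (h9 : A9 R) {z : X₁ × X₂} (hz : z ∈ NWreg R)
    {x y : X₁} {t : X₂} (hx : (x, t) ∈ NWz R z) (hy : (y, t) ∈ NWz R z)
    (hip : IP R (x, t) (y, t)) : Ge1 R x y ∧ Ge1 R y x := by
  by_contra hc
  have hfin : (Set.univ : Set ℤ).Finite := by
    refine h9.2.2.1 z hz Set.univ (fun _ => t) x y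
      ⟨fun _ _ _ _ _ _ _ => trivial, hc, fun i _ _ => hip⟩
      ⟨(x, t), (x, t), fun i _ => ⟨rrefl h1 _, rrefl h1 _⟩⟩ (fun i _ => ⟨hx, hy⟩)
  exact Set.infinite_univ hfin

lemma eq1_of_ip_SE (h1 : A1 R) (h9 : A9 R) {z : X₁ × X₂} (hz : z ∈ SEreg R)
    {x y : X₁} {t : X₂} (hx : (x, t) ∈ SEz R z) (hy : (y, t) ∈ SEz R z)
    (hip : IP R (x, t) (y, t)) : Ge1 R x y ∧ Ge1 R y x := by
  by_contra hc
  have hfin : (Set.univ : Set ℤ).Finite := by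
    refine h9.2.2.2 z hz Set.univ (fun _ => t) x y
      ⟨fun _ _ _ _ _ _ _ => trivial, hc, fun i _ _ => hip⟩
      ⟨(x, t), (x, t), fun i _ => ⟨rrefl h1 _, rrefl h1 _⟩⟩ (fun i _ => ⟨hx, hy⟩)
  exact Set.infinite_univ hfin

/-- Strictness on the second coordinate inside an NW cone. -/
lemma eq2_of_ip_NW (h1 : A1 R) (h9 : A9 R) {z : X₁ × X₂} (hz : z ∈ NWreg R)
    {x : X₁} {t u : X₂} (hx : (x, t) ∈ NWz R z) (hy : (x, u) ∈ NWz R z)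
    (hip : IP R (x, t) (x, u)) : Ge2 R t u ∧ Ge2 R u t := by
  by_contra hc
  have hfin : (Set.univ : Set ℤ).Finite := by
    refine h9.1 z hz Set.univ (fun _ => x) t u
      ⟨fun _ _ _ _ _ _ _ => trivial, hc, fun i _ _ => hip⟩
      ⟨(x, t), (x, t), fun i _ => ⟨rrefl h1 _, rrefl h1 _⟩⟩ (fun i _ => ⟨hx, hy⟩)
  exact Set.infinite_univ hfin

lemma eq2_of_ip_SE (h1 : A1 R) (h9 : A9 R) {z : X₁ × X₂} (hz : z ∈ SEreg R)
    {x : X₁} {t u : X₂} (hx : (x, t) ∈ SEz R z) (hy : (x, u) ∈ SEz R z)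
    (hip : IP R (x, t) (x, u)) : Ge2 R t u ∧ Ge2 R u t := by
  by_contra hc
  have hfin : (Set.univ : Set ℤ).Finite := by
    refine h9.2.1 z hz Set.univ (fun _ => x) t u
      ⟨fun _ _ _ _ _ _ _ => trivial, hc, fun i _ _ => hip⟩
      ⟨(x, t), (x, t), fun i _ => ⟨rrefl h1 _, rrefl h1 _⟩⟩ (fun i _ => ⟨hx, hy⟩)
  exact Set.infinite_univ hfin

lemma AddRep.r_iff {V₁ : X₁ → ℝ} {V₂ : X₂ → ℝ} {A : Set (X₁ × X₂)}
    (h : AddRep R V₁ V₂ A) {x y : X₁ × X₂} (hx : x ∈ A) (hy : y ∈ A) :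
    R x y ↔ V₁ y.1 + V₂ y.2 ≤ V₁ x.1 + V₂ x.2 := h x hx y hy

lemma AddRep.sp_iff {V₁ : X₁ → ℝ} {V₂ : X₂ → ℝ} {A : Set (X₁ × X₂)}
    (h : AddRep R V₁ V₂ A) {x y : X₁ × X₂} (hx : x ∈ A) (hy : y ∈ A) :
    SP R x y ↔ V₁ y.1 + V₂ y.2 < V₁ x.1 + V₂ x.2 := by
  rw [SP, h x hx y hy, h y hy x hx, lt_iff_le_not_ge]

lemma AddRep.ip_iff {V₁ : X₁ → ℝ} {V₂ : X₂ → ℝ} {A : Set (X₁ × X₂)}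
    (h : AddRep R V₁ V₂ A) {x y : X₁ × X₂} (hx : x ∈ A) (hy : y ∈ A) :
    IP R x y ↔ V₁ x.1 + V₂ x.2 = V₁ y.1 + V₂ y.2 := by
  rw [IP, h x hx y hy, h y hy x hx, le_antisymm_iff]
  tauto

end AuxLemmas

section AuxLemmas2

variable {X₁ X₂ : Type*} {R : X₁ × X₂ → X₁ × X₂ → Prop}

lemma D1_exists_SE {a : X₁} (ha : a ∈ D1 R) :
    ∃ z, (z ∈ Theta R \ SEext R) ∧ Ge1 R a z.1 := by
  obtain ⟨⟨p, hp⟩, -⟩ := ha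
  simp only [SEstar, Set.mem_iUnion] at hp
  obtain ⟨z, hz, hmem⟩ := hp
  exact ⟨z, hz, hmem.1⟩

lemma D1_exists_NW {a : X₁} (ha : a ∈ D1 R) :
    ∃ z, (z ∈ Theta R \ NWext R) ∧ Ge1 R z.1 a := by
  obtain ⟨-, ⟨p, hp⟩⟩ := ha
  simp only [NWstar, Set.mem_iUnion] at hp
  obtain ⟨z, hz, hmem⟩ := hp
  exact ⟨z, hz, hmem.2⟩

/-- A common SE cone basepoint for three elements of `D1`. -/
lemma commonSE (h1 : A1 R) (h2 : A2 R) {a b c : X₁}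
    (ha : a ∈ D1 R) (hb : b ∈ D1 R) (hc : c ∈ D1 R) :
    ∃ z, (z ∈ Theta R \ SEext R) ∧ Ge1 R a z.1 ∧ Ge1 R b z.1 ∧ Ge1 R c z.1 := by
  obtain ⟨za, hza, haz⟩ := D1_exists_SE ha
  obtain ⟨zb, hzb, hbz⟩ := D1_exists_SE hb
  obtain ⟨zc, hzc, hcz⟩ := D1_exists_SE hc
  -- pick the one with Ge1-smallest first coordinate
  rcases ge1_total h1 h2 za.1 zb.1 with hab | hab
  · rcases ge1_total h1 h2 zb.1 zc.1 with hbc | hbc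
    · exact ⟨zc, hzc, ge1_trans h1 haz (ge1_trans h1 hab hbc),
        ge1_trans h1 hbz hbc, hcz⟩
    · exact ⟨zb, hzb, ge1_trans h1 haz hab, hbz, ge1_trans h1 hcz hbc⟩
  · rcases ge1_total h1 h2 za.1 zc.1 with hac | hac
    · exact ⟨zc, hzc, ge1_trans h1 haz hac, ge1_trans h1 hbz (ge1_trans h1 hab hac), hcz⟩
    · exact ⟨za, hza, haz, ge1_trans h1 hbz hab, ge1_trans h1 hcz hac⟩

/-- A common NW cone basepoint for three elements of `D1`. -/
lemma commonNW (h1 : A1 R) (h2 : A2 R) {a b c : X₁}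
    (ha : a ∈ D1 R) (hb : b ∈ D1 R) (hc : c ∈ D1 R) :
    ∃ z, (z ∈ Theta R \ NWext R) ∧ Ge1 R z.1 a ∧ Ge1 R z.1 b ∧ Ge1 R z.1 c := by
  obtain ⟨za, hza, haz⟩ := D1_exists_NW ha
  obtain ⟨zb, hzb, hbz⟩ := D1_exists_NW hb
  obtain ⟨zc, hzc, hcz⟩ := D1_exists_NW hc
  rcases ge1_total h1 h2 za.1 zb.1 with hab | hab
  · rcases ge1_total h1 h2 za.1 zc.1 with hac | hac
    · exact ⟨za, hza, haz, ge1_trans h1 hab hbz, ge1_trans h1 hac hcz⟩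
    · exact ⟨zc, hzc, ge1_trans h1 hac haz, ge1_trans h1 (ge1_trans h1 hac hab) hbz, hcz⟩
  · rcases ge1_total h1 h2 zb.1 zc.1 with hbc | hbc
    · exact ⟨zb, hzb, ge1_trans h1 hab haz, hbz, ge1_trans h1 hbc hcz⟩
    · exact ⟨zc, hzc, ge1_trans h1 (ge1_trans h1 hbc hab) haz, ge1_trans h1 hbc hbz, hcz⟩

end AuxLemmas2

set_option maxHeartbeats 4000000 in
/-- Alignment of the first-coordinate value functions of the SE and NW representations. -/
theorem align_first_value_functions {X₁ X₂ : Type*} [Nonempty X₁] [Nonempty X₂]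
    (R : X₁ × X₂ → X₁ × X₂ → Prop)
    (h1 : A1 R) (h2 : A2 R) (h3 : A3 R) (h4 : A4 R) (h8 : A8 R) (h9 : A9 R)
    (hdense : OrderDense R)
    (hE1s : Ess1 R (SEreg R)) (hE2s : Ess2 R (SEreg R))
    (hE1n : Ess1 R (NWreg R)) (hE2n : Ess2 R (NWreg R))
    (V₁s : X₁ → ℝ) (V₂s : X₂ → ℝ) (V₁n : X₁ → ℝ) (V₂n : X₂ → ℝ)
    (hs : ∀ z ∈ Theta R \ SEext R, AddRep R V₁s V₂s (SEz R z))
    (hn : ∀ z ∈ Theta R \ NWext R, AddRep R V₁n V₂n (NWz R z))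
    (r0 r1 : X₁) (hr0 : r0 ∈ D1 R) (hr1 : r1 ∈ D1 R)
    (hord : Ge1 R r1 r0) (hord' : ¬ Ge1 R r0 r1)
    (h0s : V₁s r0 = 0) (h0n : V₁n r0 = 0) (h1s : V₁s r1 = 1) (h1n : V₁n r1 = 1) :
    ∀ a ∈ D1 R, V₁s a = V₁n a := by
  intro a ha
  obtain ⟨Z, hZmem, haZ, hr0Z, hr1Z⟩ := commonSE h1 h2 ha hr0 hr1
  obtain ⟨W, hWmem, hWa, hWr0, hWr1⟩ := commonNW h1 h2 ha hr0 hr1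
  have repS : AddRep R V₁s V₂s (SEz R Z) := hs Z hZmem
  have repN : AddRep R V₁n V₂n (NWz R W) := hn W hWmem
  have hZreg : SEz R Z ⊆ SEreg R := SEz_sub_SEreg hZmem h1
  have hWreg : NWz R W ⊆ NWreg R := NWz_sub_NWreg hWmem h1
  have hZSE : Z ∈ SEreg R := hZmem.1.1
  have hWNW : W ∈ NWreg R := hWmem.1.2
  -- membership helpers
  have mS : ∀ (x : X₁) (u : X₂), Ge1 R x Z.1 → Ge2 R Z.2 u → (x,u) ∈ SEz R Z :=
    fun x u hx hu => ⟨hx, hu⟩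
  have mN : ∀ (x : X₁) (u : X₂), Ge1 R W.1 x → Ge2 R u W.2 → (x,u) ∈ NWz R W :=
    fun x u hx hu => ⟨hu, hx⟩
  -- value-form representation statements
  have SR : ∀ (x : X₁) (u : X₂) (y : X₁) (v : X₂),
      (x,u) ∈ SEz R Z → (y,v) ∈ SEz R Z →
      (R (x,u) (y,v) ↔ V₁s y + V₂s v ≤ V₁s x + V₂s u) :=
    fun x u y v hx hy => repS.r_iff hx hy
  have SSP : ∀ (x : X₁) (u : X₂) (y : X₁) (v : X₂),
      (x,u) ∈ SEz R Z → (y,v) ∈ SEz R Z →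
      (SP R (x,u) (y,v) ↔ V₁s y + V₂s v < V₁s x + V₂s u) :=
    fun x u y v hx hy => repS.sp_iff hx hy
  have SIP : ∀ (x : X₁) (u : X₂) (y : X₁) (v : X₂),
      (x,u) ∈ SEz R Z → (y,v) ∈ SEz R Z →
      (IP R (x,u) (y,v) ↔ V₁s x + V₂s u = V₁s y + V₂s v) :=
    fun x u y v hx hy => repS.ip_iff hx hy
  have NR : ∀ (x : X₁) (u : X₂) (y : X₁) (v : X₂),
      (x,u) ∈ NWz R W → (y,v) ∈ NWz R W →
      (R (x,u) (y,v) ↔ V₁n y + V₂n v ≤ V₁n x + V₂n u) :=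
    fun x u y v hx hy => repN.r_iff hx hy
  have NSP : ∀ (x : X₁) (u : X₂) (y : X₁) (v : X₂),
      (x,u) ∈ NWz R W → (y,v) ∈ NWz R W →
      (SP R (x,u) (y,v) ↔ V₁n y + V₂n v < V₁n x + V₂n u) :=
    fun x u y v hx hy => repN.sp_iff hx hy
  have NIP : ∀ (x : X₁) (u : X₂) (y : X₁) (v : X₂),
      (x,u) ∈ NWz R W → (y,v) ∈ NWz R W →
      (IP R (x,u) (y,v) ↔ V₁n x + V₂n u = V₁n y + V₂n v) :=
    fun x u y v hx hy => repN.ip_iff hx hy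
  -- spread of the second coordinate in the SE cone
  obtain ⟨y₂, hy₂⟩ : ∃ u, ¬ Ge2 R u Z.2 := by
    by_contra hc; push_neg at hc
    exact hZmem.2 ⟨hZmem.1, Or.inl (fun u => hc u)⟩
  have hσy : Ge2 R Z.2 y₂ := ge2_of_not_ge2 h1 h2 hy₂
  have hεs : V₂s y₂ < V₂s Z.2 := by
    have hle : V₂s y₂ ≤ V₂s Z.2 := by
      have := (SR r0 Z.2 r0 y₂ (mS r0 Z.2 hr0Z (ge2_refl h1 Z.2)) (mS r0 y₂ hr0Z hσy)).1
        (hσy r0)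
      linarith
    rcases lt_or_eq_of_le hle with h | h
    · exact h
    · exfalso
      have hip : IP R (r0, Z.2) (r0, y₂) :=
        (SIP r0 Z.2 r0 y₂ (mS r0 Z.2 hr0Z (ge2_refl h1 Z.2)) (mS r0 y₂ hr0Z hσy)).2
          (by linarith)
      exact hy₂ (eq2_of_ip_SE h1 h9 hZSE (mS r0 Z.2 hr0Z (ge2_refl h1 Z.2))
        (mS r0 y₂ hr0Z hσy) hip).2
  -- spread of the second coordinate in the NW cone
  obtain ⟨p₂, hp₂⟩ : ∃ u, ¬ Ge2 R W.2 u := by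
    by_contra hc; push_neg at hc
    exact hWmem.2 ⟨hWmem.1, Or.inr (fun u => hc u)⟩
  have hτp : Ge2 R p₂ W.2 := ge2_of_not_ge2 h1 h2 hp₂
  have hεn : V₂n W.2 < V₂n p₂ := by
    have hle : V₂n W.2 ≤ V₂n p₂ := by
      have := (NR r0 p₂ r0 W.2 (mN r0 p₂ hWr0 hτp) (mN r0 W.2 hWr0 (ge2_refl h1 W.2))).1
        (hτp r0)
      linarith
    rcases lt_or_eq_of_le hle with h | h
    · exact h
    · exfalso
      have hip : IP R (r0, p₂) (r0, W.2) :=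
        (NIP r0 p₂ r0 W.2 (mN r0 p₂ hWr0 hτp) (mN r0 W.2 hWr0 (ge2_refl h1 W.2))).2
          (by linarith)
      exact hp₂ (eq2_of_ip_NW h1 h9 hWNW (mN r0 p₂ hWr0 hτp)
        (mN r0 W.2 hWr0 (ge2_refl h1 W.2)) hip).2
  -- monotonicity transfer from the NW values to the SE values
  have monoNS : ∀ x y : X₁, Ge1 R x Z.1 → Ge1 R y Z.1 → Ge1 R W.1 x → Ge1 R W.1 y →
      V₁n x ≤ V₁n y → V₁s x ≤ V₁s y := by
    intro x y hxZ hyZ hWx hWy hle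
    have hxN : (x, W.2) ∈ NWz R W := mN x W.2 hWx (ge2_refl h1 W.2)
    have hyN : (y, W.2) ∈ NWz R W := mN y W.2 hWy (ge2_refl h1 W.2)
    have hxS : (x, Z.2) ∈ SEz R Z := mS x Z.2 hxZ (ge2_refl h1 Z.2)
    have hyS : (y, Z.2) ∈ SEz R Z := mS y Z.2 hyZ (ge2_refl h1 Z.2)
    rcases eq_or_lt_of_le hle with he | hlt
    · have hip : IP R (x, W.2) (y, W.2) := (NIP x W.2 y W.2 hxN hyN).2 (by linarith)
      have hge := eq1_of_ip_NW h1 h9 hWNW hxN hyN hip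
      have := (SR y Z.2 x Z.2 hyS hxS).1 (hge.2 Z.2)
      linarith
    · have hsp : SP R (y, W.2) (x, W.2) := (NSP y W.2 x W.2 hyN hxN).2 (by linarith)
      have hge : Ge1 R y x := fun u => h2.1 y x W.2 hsp u
      have := (SR y Z.2 x Z.2 hyS hxS).1 (hge Z.2)
      linarith
  have key : ∀ ε : ℝ, 0 < ε → |V₁s a - V₁n a| ≤ ε := by
    intro ε hε
    -- the top element
    obtain ⟨m₁, hm₁Z, hWm₁, hm₁r0, hm₁r1, hm₁a⟩ :
        ∃ m₁ : X₁, Ge1 R m₁ Z.1 ∧ Ge1 R W.1 m₁ ∧ Ge1 R m₁ r0 ∧ Ge1 R m₁ r1 ∧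
          Ge1 R m₁ a := by
      by_cases har1 : Ge1 R a r1
      · exact ⟨a, haZ, hWa, ge1_trans h1 har1 hord, har1, ge1_refl h1 a⟩
      · exact ⟨r1, hr1Z, hWr1, hord, ge1_refl h1 r1, ge1_of_not_ge1 h1 h2 har1⟩
    have hM1 : 1 ≤ V₁n m₁ := by
      have := (NR m₁ W.2 r1 W.2 (mN _ _ hWm₁ (ge2_refl h1 W.2))
        (mN _ _ hWr1 (ge2_refl h1 W.2))).1 (hm₁r1 W.2)
      linarith [h1n.symm.le]
    have hTM : V₁n a ≤ V₁n m₁ := by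
      have := (NR m₁ W.2 a W.2 (mN _ _ hWm₁ (ge2_refl h1 W.2))
        (mN _ _ hWa (ge2_refl h1 W.2))).1 (hm₁a W.2)
      linarith
    have hSM1 : 1 ≤ V₁s m₁ := by
      have := (SR m₁ Z.2 r1 Z.2 (mS _ _ hm₁Z (ge2_refl h1 Z.2))
        (mS _ _ hr1Z (ge2_refl h1 Z.2))).1 (hm₁r1 Z.2)
      linarith [h1s.symm.le]
    -- arbitrarily small achievable steps
    have small : ∀ m : ℕ, ∃ st : X₂ × X₂, Ge2 R st.1 W.2 ∧ Ge2 R st.2 W.2 ∧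
        0 < V₂n st.1 - V₂n st.2 ∧ V₂n st.1 - V₂n st.2 ≤ (V₂n p₂ - V₂n W.2) / 2 ^ m := by
      intro m
      induction m with
      | zero =>
        refine ⟨(p₂, W.2), hτp, ge2_refl h1 W.2, by dsimp only; linarith, by dsimp only; norm_num⟩
      | succ m ih =>
        obtain ⟨⟨pp, qq⟩, hp', hq', hpos', hle'⟩ := ih
        have hppW : (r0, pp) ∈ NWz R W := mN _ _ hWr0 hp'
        have hqqW : (r0, qq) ∈ NWz R W := mN _ _ hWr0 hq'
        have hspp : SP R (r0, pp) (r0, qq) := (NSP r0 pp r0 qq hppW hqqW).2 (by linarith)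
        obtain ⟨zz, hz1, hz2⟩ := hdense _ _ hspp
        obtain ⟨b₂, hb₂⟩ := h8.1 r0 pp qq zz hz1.1 hz2.1
        have hb₂q : Ge2 R b₂ qq := by
          by_contra hc
          obtain ⟨x', hx'⟩ := exists_sp2_of_not_ge2 h1 hc
          have hall : ∀ b : X₁, R (b, qq) (b, b₂) := fun b => h2.2 qq b₂ x' hx' b
          exact hz2.2 (h1.2 _ _ _ (hall r0) (h1.2 _ _ _ hb₂.1 (rrefl h1 zz)))
        have hb₂p : Ge2 R pp b₂ := by
          by_contra hc
          obtain ⟨x', hx'⟩ := exists_sp2_of_not_ge2 h1 hc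
          have hall : ∀ b : X₁, R (b, b₂) (b, pp) := fun b => h2.2 b₂ pp x' hx' b
          exact hz1.2 (h1.2 _ _ _ hb₂.2 (hall r0))
        have hb₂W : (r0, b₂) ∈ NWz R W := mN _ _ hWr0 (ge2_trans h1 hb₂q hq')
        have h1v : V₂n b₂ < V₂n pp := by
          have := (NSP r0 pp r0 b₂ hppW hb₂W).1 (sp_ip_trans h1 hz1 (ip_symm hb₂))
          linarith
        have h2v : V₂n qq < V₂n b₂ := by
          have := (NSP r0 b₂ r0 qq hb₂W hqqW).1 (ip_sp_trans h1 hb₂ hz2)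
          linarith
        have h2m : (0:ℝ) < 2 ^ m := by positivity
        rcases le_total (V₂n b₂ - V₂n qq) (V₂n pp - V₂n b₂) with hhalf | hhalf
        · refine ⟨(b₂, qq), ge2_trans h1 hb₂q hq', hq', by dsimp only; linarith, ?_⟩
          have : V₂n b₂ - V₂n qq ≤ (V₂n pp - V₂n qq) / 2 := by linarith
          dsimp only
          rw [pow_succ, ← div_div]
          linarith
        · refine ⟨(pp, b₂), hp', ge2_trans h1 hb₂q hq', by dsimp only; linarith, ?_⟩
          have : V₂n pp - V₂n b₂ ≤ (V₂n pp - V₂n qq) / 2 := by linarith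
          dsimp only
          rw [pow_succ, ← div_div]
          linarith
    -- choice of the step size Δ
    have hεs' : (0:ℝ) < V₂s Z.2 - V₂s y₂ := by linarith
    have hC0 : (0:ℝ) < V₁n m₁ + |V₁n a| + 2 := by
      have := abs_nonneg (V₁n a); linarith
    have hd1 : (0:ℝ) < V₁s m₁ / (V₂s Z.2 - V₂s y₂) + 1 := by
      have := div_nonneg (by linarith : (0:ℝ) ≤ V₁s m₁) hεs'.le; linarith
    have hd2 : (0:ℝ) < (V₁n m₁ + |V₁n a| + 2) / ε + 1 := by
      have := div_nonneg hC0.le hε.le; linarith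
    have hB0 : (0:ℝ) < min (min ((1:ℝ)/2) (1/(V₁s m₁/(V₂s Z.2 - V₂s y₂) + 1)))
        (1/((V₁n m₁ + |V₁n a| + 2)/ε + 1)) :=
      lt_min (lt_min (by norm_num) (one_div_pos.2 hd1)) (one_div_pos.2 hd2)
    obtain ⟨mm, hmm⟩ : ∃ mm : ℕ, (V₂n p₂ - V₂n W.2)/2^mm ≤
        min (min ((1:ℝ)/2) (1/(V₁s m₁/(V₂s Z.2 - V₂s y₂) + 1)))
          (1/((V₁n m₁ + |V₁n a| + 2)/ε + 1)) := by
      obtain ⟨mm, hmm⟩ := pow_unbounded_of_one_lt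
        ((V₂n p₂ - V₂n W.2) / min (min ((1:ℝ)/2) (1/(V₁s m₁/(V₂s Z.2 - V₂s y₂) + 1)))
          (1/((V₁n m₁ + |V₁n a| + 2)/ε + 1))) (one_lt_two)
      refine ⟨mm, ?_⟩
      rw [div_lt_iff₀ hB0] at hmm
      rw [div_le_iff₀ (by positivity : (0:ℝ) < 2^mm)]
      rw [mul_comm] at hmm
      exact hmm.le
    obtain ⟨⟨p, q⟩, hpτ, hqτ, hΔpos0, hΔle0⟩ := small mm
    dsimp only at hpτ hqτ hΔpos0 hΔle0
    set Δ : ℝ := V₂n p - V₂n q with hΔdef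
    clear_value Δ
    have hΔpos : 0 < Δ := hΔpos0
    have hΔle : Δ ≤ min (min ((1:ℝ)/2) (1/(V₁s m₁/(V₂s Z.2 - V₂s y₂) + 1)))
        (1/((V₁n m₁ + |V₁n a| + 2)/ε + 1)) := le_trans hΔle0 hmm
    have hΔhalf : Δ ≤ 1/2 :=
      le_trans hΔle (le_trans (min_le_left _ _) (min_le_left _ _))
    have hΔsm : Δ ≤ 1/(V₁s m₁/(V₂s Z.2 - V₂s y₂) + 1) :=
      le_trans hΔle (le_trans (min_le_left _ _) (min_le_right _ _))
    have hΔeps : Δ ≤ 1/((V₁n m₁ + |V₁n a| + 2)/ε + 1) :=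
      le_trans hΔle (min_le_right _ _)
    -- the index bound K
    set K : ℕ := ⌊V₁n m₁ / Δ⌋₊ with hKdef
    have hK1 : (K:ℝ) * Δ ≤ V₁n m₁ := by
      have h := Nat.floor_le (div_nonneg (by linarith : (0:ℝ) ≤ V₁n m₁) hΔpos.le)
      rw [← hKdef] at h
      exact (le_div_iff₀ hΔpos).1 h
    have hK2 : V₁n m₁ < ((K:ℝ)+1) * Δ := by
      have h := Nat.lt_floor_add_one (V₁n m₁/Δ)
      rw [← hKdef] at h
      exact (div_lt_iff₀ hΔpos).1 h
    clear_value K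
    -- the one-step extension lemma (ascending)
    have ext : ∀ (b : X₁) (i : ℕ), Ge1 R b r0 → Ge1 R m₁ b → V₁n b = i * Δ →
        ((i:ℝ)+1) * Δ ≤ V₁n m₁ →
        ∃ c, IP R (c,q) (b,p) ∧ Ge1 R c b ∧ Ge1 R m₁ c := by
      intro b i hbr0 hmb hnb hiM
      have hWb : Ge1 R W.1 b := ge1_trans h1 hWm₁ hmb
      have hbp : (b,p) ∈ NWz R W := mN _ _ hWb hpτ
      have hbq : (b,q) ∈ NWz R W := mN _ _ hWb hqτ
      have hmq : (m₁,q) ∈ NWz R W := mN _ _ hWm₁ hqτ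
      have h1' : R (m₁,q) (b,p) := (NR _ _ _ _ hmq hbp).2 (by
        have := hΔdef; linarith)
      have h2' : R (b,p) (b,q) := (NR _ _ _ _ hbp hbq).2 (by
        have := hΔdef; linarith)
      obtain ⟨c₀, hc₀⟩ := h8.2 q m₁ b (b,p) h1' h2'
      have hsp : SP R (b,p) (b,q) := (NSP _ _ _ _ hbp hbq).2 (by
        have := hΔdef; linarith)
      by_cases hcm : Ge1 R m₁ c₀
      · exact ⟨c₀, hc₀, fun u => h2.1 c₀ b q (ip_sp_trans h1 hc₀ hsp) u, hcm⟩
      · have hge := ge1_of_not_ge1 h1 h2 hcm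
        exact ⟨m₁, ⟨h1', h1.2 _ _ _ hc₀.2 (hge q)⟩, hmb, ge1_refl h1 m₁⟩
    -- the standard sequence
    set φ : X₁ → X₁ := fun b =>
      if h : ∃ c, IP R (c,q) (b,p) ∧ Ge1 R c b ∧ Ge1 R m₁ c then h.choose else b
      with hφdef
    have hφ : ∀ b, (∃ c, IP R (c,q) (b,p) ∧ Ge1 R c b ∧ Ge1 R m₁ c) →
        IP R (φ b, q) (b,p) ∧ Ge1 R (φ b) b ∧ Ge1 R m₁ (φ b) := by
      intro b h
      rw [hφdef]
      simp only [dif_pos h]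
      exact h.choose_spec
    set g : ℕ → X₁ := fun n => φ^[n] r0 with hgdef
    have hg0 : g 0 = r0 := by rw [hgdef]; rfl
    have hgs : ∀ i, g (i+1) = φ (g i) := by
      intro i; rw [hgdef]; exact Function.iterate_succ_apply' φ i r0
    clear_value φ g
    have inv : ∀ i : ℕ, i ≤ K → Ge1 R (g i) r0 ∧ Ge1 R m₁ (g i) ∧ V₁n (g i) = i * Δ := by
      intro i
      induction i with
      | zero =>
        intro _
        refine ⟨by rw [hg0]; exact ge1_refl h1 r0, by rw [hg0]; exact hm₁r0, ?_⟩
        rw [hg0, h0n]; simp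
      | succ i ih =>
        intro hle
        have hi := ih (Nat.le_of_succ_le hle)
        have hcont : ((i:ℝ)+1) * Δ ≤ V₁n m₁ := by
          have h' : ((i:ℝ)+1) ≤ (K:ℝ) := by exact_mod_cast Nat.cast_le.2 hle
          have h'' := mul_le_mul_of_nonneg_right h' hΔpos.le
          linarith [hK1]
        have hstep := hφ (g i) (ext (g i) i hi.1 hi.2.1 hi.2.2 hcont)
        rw [← hgs i] at hstep
        refine ⟨ge1_trans h1 hstep.2.1 hi.1, hstep.2.2, ?_⟩
        have hWgi : Ge1 R W.1 (g i) := ge1_trans h1 hWm₁ hi.2.1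
        have hWgi1 : Ge1 R W.1 (g (i+1)) := ge1_trans h1 hWm₁ hstep.2.2
        have hv := (NIP _ _ _ _ (mN _ _ hWgi1 hqτ) (mN _ _ hWgi hpτ)).1 hstep.1
        have := hΔdef
        push_cast
        linarith [hi.2.2]
    have gstep : ∀ i : ℕ, i < K → IP R ((g (i+1)),q) ((g i),p) := by
      intro i hiK
      have hi := inv i (le_of_lt hiK)
      have hcont : ((i:ℝ)+1) * Δ ≤ V₁n m₁ := by
        have h' : ((i:ℝ)+1) ≤ (K:ℝ) := by exact_mod_cast Nat.cast_le.2 hiK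
        have h'' := mul_le_mul_of_nonneg_right h' hΔpos.le
        linarith [hK1]
      have hstep := hφ (g i) (ext (g i) i hi.1 hi.2.1 hi.2.2 hcont)
      rw [← hgs i] at hstep
      exact hstep.1
    -- K is large
    have hKb : V₁s m₁ / (V₂s Z.2 - V₂s y₂) < (K:ℝ) := by
      have ha' : V₁s m₁/(V₂s Z.2 - V₂s y₂) + 1 ≤ 1/Δ := by
        have := one_div_le_one_div_of_le hΔpos hΔsm
        rwa [one_div_one_div] at this
      have hb' : 1/Δ ≤ V₁n m₁/Δ := (div_le_div_iff_of_pos_right hΔpos).2 hM1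
      have hc' : V₁n m₁/Δ < (K:ℝ) + 1 := by
        have h := Nat.lt_floor_add_one (V₁n m₁/Δ)
        rwa [← hKdef] at h
      linarith
    have hK0 : 0 < K := by
      rcases Nat.eq_zero_or_pos K with h | h
      · exfalso
        rw [h] at hKb
        simp only [Nat.cast_zero] at hKb
        have : (0:ℝ) < V₁s m₁/(V₂s Z.2 - V₂s y₂) := div_pos (by linarith) hεs'
        linarith
      · exact h
    -- pigeonhole : some step has a small s-increment
    have hbase : ∃ m' : ℕ, m' < K ∧ V₁s (g (m'+1)) - V₁s (g m') ≤ V₂s Z.2 - V₂s y₂ := by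
      by_contra hc
      push_neg at hc
      have hsum : ∑ i ∈ Finset.range K, (V₁s (g (i+1)) - V₁s (g i)) =
          V₁s (g K) - V₁s (g 0) := Finset.sum_range_sub (fun i => V₁s (g i)) K
      have hlt : (K:ℝ) * (V₂s Z.2 - V₂s y₂) <
          ∑ i ∈ Finset.range K, (V₁s (g (i+1)) - V₁s (g i)) := by
        have := Finset.sum_lt_sum_of_nonempty (Finset.nonempty_range_iff.2 hK0.ne')
          (f := fun _ : ℕ => (V₂s Z.2 - V₂s y₂))
          (g := fun i => V₁s (g (i+1)) - V₁s (g i))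
          (fun i hi => hc i (Finset.mem_range.1 hi))
        simpa [Finset.sum_const, Finset.card_range, nsmul_eq_mul, mul_sub] using this
      have hgK : V₁s (g K) ≤ V₁s m₁ := by
        refine monoNS (g K) m₁ (ge1_trans h1 (inv K le_rfl).1 hr0Z) hm₁Z
          (ge1_trans h1 hWm₁ (inv K le_rfl).2.1) hWm₁ ?_
        rw [(inv K le_rfl).2.2]; linarith [hK1]
      rw [hsum, hg0, h0s] at hlt
      rw [div_lt_iff₀ hεs'] at hKb
      linarith
    obtain ⟨m', hm'K, hm'εs⟩ := hbase
    have hnm' : V₁n (g m') = m' * Δ := (inv m' (le_of_lt hm'K)).2.2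
    have hnm'1 : V₁n (g (m'+1)) = ((m'+1 : ℕ):ℝ) * Δ := (inv (m'+1) hm'K).2.2
    have hgm'r0 : Ge1 R (g m') r0 := (inv m' (le_of_lt hm'K)).1
    have hgm'1r0 : Ge1 R (g (m'+1)) r0 := (inv (m'+1) hm'K).1
    have hZgm' : Ge1 R (g m') Z.1 := ge1_trans h1 hgm'r0 hr0Z
    have hZgm'1 : Ge1 R (g (m'+1)) Z.1 := ge1_trans h1 hgm'1r0 hr0Z
    have hWgm' : Ge1 R W.1 (g m') := ge1_trans h1 hWm₁ (inv m' (le_of_lt hm'K)).2.1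
    have hWgm'1 : Ge1 R W.1 (g (m'+1)) := ge1_trans h1 hWm₁ (inv (m'+1) hm'K).2.1
    have hsplus : SP R ((g (m'+1)), W.2) ((g m'), W.2) := by
      refine (NSP _ _ _ _ (mN _ _ hWgm'1 (ge2_refl h1 W.2))
        (mN _ _ hWgm' (ge2_refl h1 W.2))).2 ?_
      push_cast at hnm'1
      linarith [hΔpos]
    have hnotge : ¬ Ge1 R (g m') (g (m'+1)) := fun h => hsplus.2 (h W.2)
    have hsm'le : V₁s (g m') ≤ V₁s (g (m'+1)) := by
      refine monoNS (g m') (g (m'+1)) hZgm' hZgm'1 hWgm' hWgm'1 ?_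
      rw [hnm', hnm'1]; push_cast; linarith [hΔpos]
    have hsm'lt : V₁s (g m') < V₁s (g (m'+1)) := by
      rcases eq_or_lt_of_le hsm'le with he | hlt
      · exfalso
        have hip : IP R ((g (m'+1)), Z.2) ((g m'), Z.2) :=
          (SIP _ _ _ _ (mS _ _ hZgm'1 (ge2_refl h1 Z.2))
            (mS _ _ hZgm' (ge2_refl h1 Z.2))).2 (by linarith)
        exact hnotge (eq1_of_ip_SE h1 h9 hZSE (mS _ _ hZgm'1 (ge2_refl h1 Z.2))
          (mS _ _ hZgm' (ge2_refl h1 Z.2)) hip).2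
      · exact hlt
    -- solve for q''
    have hup : R ((g (m'+1)), Z.2) ((g m'), Z.2) :=
      (SR _ _ _ _ (mS _ _ hZgm'1 (ge2_refl h1 Z.2)) (mS _ _ hZgm' (ge2_refl h1 Z.2))).2
        (by linarith)
    have hdn : R ((g m'), Z.2) ((g (m'+1)), y₂) :=
      (SR _ _ _ _ (mS _ _ hZgm' (ge2_refl h1 Z.2)) (mS _ _ hZgm'1 hσy)).2
        (by linarith)
    obtain ⟨q'', hq''⟩ := h8.1 (g (m'+1)) Z.2 y₂ ((g m'), Z.2) hup hdn
    have hq''σ : Ge2 R Z.2 q'' := by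
      by_contra hc
      obtain ⟨x', hx'⟩ := exists_sp2_of_not_ge2 h1 hc
      have hall : ∀ b : X₁, R (b, q'') (b, Z.2) := fun b => h2.2 _ _ x' hx' b
      have hr : R ((g m'), Z.2) ((g (m'+1)), Z.2) :=
        h1.2 _ _ _ hq''.2 (hall (g (m'+1)))
      have := (SR _ _ _ _ (mS _ _ hZgm' (ge2_refl h1 Z.2))
        (mS _ _ hZgm'1 (ge2_refl h1 Z.2))).1 hr
      linarith
    have hΔ'val : V₁s (g (m'+1)) + V₂s q'' = V₁s (g m') + V₂s Z.2 :=
      (SIP _ _ _ _ (mS _ _ hZgm'1 hq''σ) (mS _ _ hZgm' (ge2_refl h1 Z.2))).1 hq''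
    set Δ' : ℝ := V₂s Z.2 - V₂s q'' with hΔ'def
    clear_value Δ'
    have hΔ'pos : 0 < Δ' := by rw [hΔ'def]; linarith
    -- region membership helpers
    have hNWmem : ∀ (x : X₁) (u : X₂), Ge1 R W.1 x → Ge2 R u W.2 → (x,u) ∈ NWreg R :=
      fun x u hx hu => hWreg (mN x u hx hu)
    have hSEmem : ∀ (x : X₁) (u : X₂), Ge1 R x Z.1 → Ge2 R Z.2 u → (x,u) ∈ SEreg R :=
      fun x u hx hu => hZreg (mS x u hx hu)
    -- transfer of NW-steps to equal SE-increments
    have transferNW : ∀ b c : X₁, Ge1 R b Z.1 → Ge1 R c Z.1 → Ge1 R W.1 b → Ge1 R W.1 c →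
        IP R (c,q) (b,p) → V₁s c = V₁s b + Δ' := by
      intro b c hbZ hcZ hWb hWc hip
      have case5a : In4 (NWreg R) ((g m'),p) ((g (m'+1)),q) (b,p) (c,q) :=
        ⟨hNWmem _ _ hWgm' hpτ, hNWmem _ _ hWgm'1 hqτ, hNWmem _ _ hWb hpτ,
          hNWmem _ _ hWc hqτ⟩
      have case5b : In4 (SEreg R) ((g m'),Z.2) ((g (m'+1)),q'') (b,Z.2) (c,q'') :=
        ⟨hSEmem _ _ hZgm' (ge2_refl h1 Z.2), hSEmem _ _ hZgm'1 hq''σ,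
          hSEmem _ _ hbZ (ge2_refl h1 Z.2), hSEmem _ _ hcZ hq''σ⟩
      have d1 : R (b, Z.2) (c, q'') := by
        refine h4 (g m') (g (m'+1)) b c p q Z.2 q'' ?_ (gstep m' hm'K).1 hq''.2 hip.2
        exact Or.inr (Or.inr (Or.inr (Or.inr (Or.inl ⟨case5a, hE1n, case5b⟩))))
      have case5a' : In4 (NWreg R) ((g (m'+1)),q) ((g m'),p) (c,q) (b,p) :=
        ⟨case5a.2.1, case5a.1, case5a.2.2.2, case5a.2.2.1⟩
      have case5b' : In4 (SEreg R) ((g (m'+1)),q'') ((g m'),Z.2) (c,q'') (b,Z.2) :=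
        ⟨case5b.2.1, case5b.1, case5b.2.2.2, case5b.2.2.1⟩
      have d2 : R (c, q'') (b, Z.2) := by
        refine h4 (g (m'+1)) (g m') c b q p q'' Z.2 ?_ (gstep m' hm'K).2 hq''.1 hip.1
        exact Or.inr (Or.inr (Or.inr (Or.inr (Or.inl ⟨case5a', hE1n, case5b'⟩))))
      have := (SIP c q'' b Z.2 (mS _ _ hcZ hq''σ) (mS _ _ hbZ (ge2_refl h1 Z.2))).1 ⟨d2, d1⟩
      rw [hΔ'def]; linarith
    -- transfer of SE-steps to equal NW-increments
    have transferSE : ∀ b c : X₁, Ge1 R b Z.1 → Ge1 R c Z.1 → Ge1 R W.1 b → Ge1 R W.1 c →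
        IP R (c,q'') (b,Z.2) → V₁n c = V₁n b + Δ := by
      intro b c hbZ hcZ hWb hWc hip
      have case6a : In4 (SEreg R) ((g m'),Z.2) ((g (m'+1)),q'') (b,Z.2) (c,q'') :=
        ⟨hSEmem _ _ hZgm' (ge2_refl h1 Z.2), hSEmem _ _ hZgm'1 hq''σ,
          hSEmem _ _ hbZ (ge2_refl h1 Z.2), hSEmem _ _ hcZ hq''σ⟩
      have case6b : In4 (NWreg R) ((g m'),p) ((g (m'+1)),q) (b,p) (c,q) :=
        ⟨hNWmem _ _ hWgm' hpτ, hNWmem _ _ hWgm'1 hqτ, hNWmem _ _ hWb hpτ,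
          hNWmem _ _ hWc hqτ⟩
      have d1 : R (b, p) (c, q) := by
        refine h4 (g m') (g (m'+1)) b c Z.2 q'' p q ?_ hq''.1 (gstep m' hm'K).2 hip.2
        exact Or.inr (Or.inr (Or.inr (Or.inr (Or.inr ⟨case6a, hE1s, case6b⟩))))
      have case6a' : In4 (SEreg R) ((g (m'+1)),q'') ((g m'),Z.2) (c,q'') (b,Z.2) :=
        ⟨case6a.2.1, case6a.1, case6a.2.2.2, case6a.2.2.1⟩
      have case6b' : In4 (NWreg R) ((g (m'+1)),q) ((g m'),p) (c,q) (b,p) :=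
        ⟨case6b.2.1, case6b.1, case6b.2.2.2, case6b.2.2.1⟩
      have d2 : R (c, q) (b, p) := by
        refine h4 (g (m'+1)) (g m') c b q'' Z.2 q p ?_ hq''.2 (gstep m' hm'K).1 hip.1
        exact Or.inr (Or.inr (Or.inr (Or.inr (Or.inr ⟨case6a', hE1s, case6b'⟩))))
      have := (NIP c q b p (mN _ _ hWc hqτ) (mN _ _ hWb hpτ)).1 ⟨d2, d1⟩
      rw [hΔdef]; linarith
    -- s-values along the sequence
    have sval : ∀ i : ℕ, i ≤ K → V₁s (g i) = i * Δ' := by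
      intro i
      induction i with
      | zero => intro _; rw [hg0, h0s]; simp
      | succ i ih =>
        intro hle
        have hi := ih (Nat.le_of_succ_le hle)
        have hiK : i < K := Nat.lt_of_succ_le hle
        have hZi : Ge1 R (g i) Z.1 := ge1_trans h1 (inv i (le_of_lt hiK)).1 hr0Z
        have hZi1 : Ge1 R (g (i+1)) Z.1 := ge1_trans h1 (inv (i+1) hle).1 hr0Z
        have hWi : Ge1 R W.1 (g i) := ge1_trans h1 hWm₁ (inv i (le_of_lt hiK)).2.1
        have hWi1 : Ge1 R W.1 (g (i+1)) := ge1_trans h1 hWm₁ (inv (i+1) hle).2.1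
        have := transferNW (g i) (g (i+1)) hZi hZi1 hWi hWi1 (gstep i hiK)
        rw [this, hi]; push_cast; ring
    -- bracketing r1 along the sequence
    set j : ℕ := ⌊(1:ℝ)/Δ⌋₊ with hjdef
    have hj1 : (j:ℝ) * Δ ≤ 1 := by
      have h := Nat.floor_le (le_of_lt (div_pos one_pos hΔpos))
      rw [← hjdef] at h
      exact (le_div_iff₀ hΔpos).1 h
    have hj2 : 1 < ((j:ℝ)+1) * Δ := by
      have h := Nat.lt_floor_add_one ((1:ℝ)/Δ)
      rw [← hjdef] at h
      exact (div_lt_iff₀ hΔpos).1 h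
    clear_value j
    have hjK : j ≤ K := by
      rw [hjdef, hKdef]
      exact Nat.floor_mono ((div_le_div_iff_of_pos_right hΔpos).2 hM1)
    have hj0 : 0 < j := by
      have h1' : (1:ℝ) ≤ 1/Δ := by rw [le_div_iff₀ hΔpos]; linarith
      rw [hjdef]
      exact_mod_cast Nat.le_floor (α := ℝ) (by push_cast; exact h1')
    have hjpos' : (0:ℝ) < (j:ℝ) := by exact_mod_cast hj0
    have hjΔ'1 : (j:ℝ) * Δ' ≤ 1 := by
      have h' : V₁s (g j) ≤ V₁s r1 := by
        refine monoNS (g j) r1 (ge1_trans h1 (inv j hjK).1 hr0Z) hr1Z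
          (ge1_trans h1 hWm₁ (inv j hjK).2.1) hWr1 ?_
        rw [(inv j hjK).2.2, h1n]; exact hj1
      rw [sval j hjK, h1s] at h'
      exact h'
    have hjΔ'2 : 1 ≤ ((j:ℝ)+1) * Δ' := by
      rcases lt_or_eq_of_le hjK with hlt | heq
      · have hle : j+1 ≤ K := Nat.succ_le_of_lt hlt
        have h' : V₁s r1 ≤ V₁s (g (j+1)) := by
          refine monoNS r1 (g (j+1)) hr1Z (ge1_trans h1 (inv (j+1) hle).1 hr0Z)
            hWr1 (ge1_trans h1 hWm₁ (inv (j+1) hle).2.1) ?_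
          rw [h1n, (inv (j+1) hle).2.2]; push_cast; linarith
        rw [sval (j+1) hle, h1s] at h'
        push_cast at h'
        linarith
      · by_contra hc2
        push_neg at hc2
        have hgKZ : Ge1 R (g K) Z.1 := ge1_trans h1 (inv K le_rfl).1 hr0Z
        have hWgK : Ge1 R W.1 (g K) := ge1_trans h1 hWm₁ (inv K le_rfl).2.1
        have hsvK : V₁s (g K) = (K:ℝ)*Δ' := sval K le_rfl
        have hcKj : ((K:ℝ)+1) * Δ' < 1 := by rw [← heq]; exact hc2
        have hupp : R (r1, q'') ((g K), Z.2) := by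
          refine (SR _ _ _ _ (mS _ _ hr1Z hq''σ) (mS _ _ hgKZ (ge2_refl h1 Z.2))).2 ?_
          rw [hsvK, h1s]
          have := hΔ'def
          linarith
        have hloww : R ((g K), Z.2) ((g K), q'') := by
          refine (SR _ _ _ _ (mS _ _ hgKZ (ge2_refl h1 Z.2)) (mS _ _ hgKZ hq''σ)).2 ?_
          have := hΔ'def; linarith
        obtain ⟨c₀, hc₀⟩ := h8.2 q'' r1 (g K) ((g K), Z.2) hupp hloww
        obtain ⟨c, hcip, hr1c⟩ : ∃ c, IP R (c,q'') ((g K),Z.2) ∧ Ge1 R r1 c := by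
          by_cases hrc : Ge1 R r1 c₀
          · exact ⟨c₀, hc₀, hrc⟩
          · have hge := ge1_of_not_ge1 h1 h2 hrc
            exact ⟨r1, ⟨hupp, h1.2 _ _ _ hc₀.2 (hge q'')⟩, ge1_refl h1 r1⟩
        have hspK : SP R ((g K),Z.2) ((g K),q'') := by
          refine (SSP _ _ _ _ (mS _ _ hgKZ (ge2_refl h1 Z.2)) (mS _ _ hgKZ hq''σ)).2 ?_
          have := hΔ'def; linarith
        have hcgK : Ge1 R c (g K) := fun u => h2.1 c (g K) q'' (ip_sp_trans h1 hcip hspK) u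
        have hcZ : Ge1 R c Z.1 := ge1_trans h1 hcgK hgKZ
        have hWc : Ge1 R W.1 c := ge1_trans h1 hWr1 hr1c
        have hnc := transferSE (g K) c hgKZ hcZ hWgK hWc hcip
        have hle1 : V₁n c ≤ V₁n r1 := by
          have := (NR r1 W.2 c W.2 (mN _ _ hWr1 (ge2_refl h1 W.2))
            (mN _ _ hWc (ge2_refl h1 W.2))).1 (hr1c W.2)
          linarith
        rw [(inv K le_rfl).2.2] at hnc
        rw [h1n] at hle1
        have hj2' : 1 < ((K:ℝ)+1) * Δ := by rw [← heq]; exact hj2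
        linarith
    have hΔ'lb : 1/((j:ℝ)+1) ≤ Δ' := by
      rw [div_le_iff₀ (by linarith : (0:ℝ) < (j:ℝ)+1)]
      linarith
    have hΔ'ub : Δ' ≤ 1/(j:ℝ) := by
      rw [le_div_iff₀ hjpos']
      linarith
    have hΔlb : 1/((j:ℝ)+1) ≤ Δ := by
      rw [div_le_iff₀ (by linarith : (0:ℝ) < (j:ℝ)+1)]
      linarith
    have hΔub : Δ ≤ 1/(j:ℝ) := by
      rw [le_div_iff₀ hjpos']
      linarith
    -- quantities controlling the final estimate
    have hDle : Δ' - Δ ≤ 1/(j:ℝ) - 1/((j:ℝ)+1) := by linarith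
    have hDle' : Δ - Δ' ≤ 1/(j:ℝ) - 1/((j:ℝ)+1) := by linarith
    have hεj : (V₁n m₁ + |V₁n a| + 2) < (j:ℝ)*ε := by
      have e1 : (V₁n m₁ + |V₁n a| + 2)/ε + 1 ≤ 1/Δ := by
        have := one_div_le_one_div_of_le hΔpos hΔeps
        rwa [one_div_one_div] at this
      have e2 : 1/Δ < (j:ℝ)+1 := by rw [div_lt_iff₀ hΔpos]; linarith
      have e3 : (V₁n m₁ + |V₁n a| + 2)/ε < (j:ℝ) := by linarith
      rw [div_lt_iff₀ hε] at e3
      linarith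
    by_cases hTpos : Ge1 R a r0
    · -- the case  r0 ≼₁ a
      have hT0 : 0 ≤ V₁n a := by
        have := (NR a W.2 r0 W.2 (mN _ _ hWa (ge2_refl h1 W.2))
          (mN _ _ hWr0 (ge2_refl h1 W.2))).1 (hTpos W.2)
        linarith
      set i : ℕ := ⌊V₁n a/Δ⌋₊ with hidef
      have hi1 : (i:ℝ)*Δ ≤ V₁n a := by
        have h := Nat.floor_le (div_nonneg hT0 hΔpos.le)
        rw [← hidef] at h
        exact (le_div_iff₀ hΔpos).1 h
      have hi2 : V₁n a < ((i:ℝ)+1)*Δ := by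
        have h := Nat.lt_floor_add_one (V₁n a/Δ)
        rw [← hidef] at h
        exact (div_lt_iff₀ hΔpos).1 h
      clear_value i
      have hiK : i ≤ K := by
        rw [hidef, hKdef]
        exact Nat.floor_mono ((div_le_div_iff_of_pos_right hΔpos).2 hTM)
      have hlow : (i:ℝ)*Δ' ≤ V₁s a := by
        have h' : V₁s (g i) ≤ V₁s a := by
          refine monoNS (g i) a (ge1_trans h1 (inv i hiK).1 hr0Z) haZ
            (ge1_trans h1 hWm₁ (inv i hiK).2.1) hWa ?_
          rw [(inv i hiK).2.2]; exact hi1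
        rw [sval i hiK] at h'
        exact h'
      have hupp : V₁s a ≤ ((i:ℝ)+1)*Δ' := by
        rcases lt_or_eq_of_le hiK with hlt | heq
        · have hle : i+1 ≤ K := Nat.succ_le_of_lt hlt
          have h' : V₁s a ≤ V₁s (g (i+1)) := by
            refine monoNS a (g (i+1)) haZ (ge1_trans h1 (inv (i+1) hle).1 hr0Z)
              hWa (ge1_trans h1 hWm₁ (inv (i+1) hle).2.1) ?_
            rw [(inv (i+1) hle).2.2]; push_cast; linarith
          rw [sval (i+1) hle] at h'
          push_cast at h'
          linarith
        · by_contra hc2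
          push_neg at hc2
          have hgKZ : Ge1 R (g K) Z.1 := ge1_trans h1 (inv K le_rfl).1 hr0Z
          have hWgK : Ge1 R W.1 (g K) := ge1_trans h1 hWm₁ (inv K le_rfl).2.1
          have hsvK : V₁s (g K) = (K:ℝ)*Δ' := sval K le_rfl
          have hcKi : ((K:ℝ)+1) * Δ' < V₁s a := by rw [← heq]; exact hc2
          have hupp' : R (a, q'') ((g K), Z.2) := by
            refine (SR _ _ _ _ (mS _ _ haZ hq''σ) (mS _ _ hgKZ (ge2_refl h1 Z.2))).2 ?_
            rw [hsvK]
            have := hΔ'def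
            linarith
          have hloww' : R ((g K), Z.2) ((g K), q'') := by
            refine (SR _ _ _ _ (mS _ _ hgKZ (ge2_refl h1 Z.2)) (mS _ _ hgKZ hq''σ)).2 ?_
            have := hΔ'def; linarith
          obtain ⟨c₀, hc₀⟩ := h8.2 q'' a (g K) ((g K), Z.2) hupp' hloww'
          obtain ⟨c, hcip, hac⟩ : ∃ c, IP R (c,q'') ((g K),Z.2) ∧ Ge1 R a c := by
            by_cases hrc : Ge1 R a c₀
            · exact ⟨c₀, hc₀, hrc⟩
            · have hge := ge1_of_not_ge1 h1 h2 hrc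
              exact ⟨a, ⟨hupp', h1.2 _ _ _ hc₀.2 (hge q'')⟩, ge1_refl h1 a⟩
          have hspK : SP R ((g K),Z.2) ((g K),q'') := by
            refine (SSP _ _ _ _ (mS _ _ hgKZ (ge2_refl h1 Z.2)) (mS _ _ hgKZ hq''σ)).2 ?_
            have := hΔ'def; linarith
          have hcgK : Ge1 R c (g K) := fun u => h2.1 c (g K) q'' (ip_sp_trans h1 hcip hspK) u
          have hcZ : Ge1 R c Z.1 := ge1_trans h1 hcgK hgKZ
          have hWc : Ge1 R W.1 c := ge1_trans h1 hWa hac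
          have hnc := transferSE (g K) c hgKZ hcZ hWgK hWc hcip
          have hle1 : V₁n c ≤ V₁n a := by
            have := (NR a W.2 c W.2 (mN _ _ hWa (ge2_refl h1 W.2))
              (mN _ _ hWc (ge2_refl h1 W.2))).1 (hac W.2)
            linarith
          rw [(inv K le_rfl).2.2] at hnc
          linarith [hTM, hK2]
      -- the final estimate in this case
      have hiMj : (i:ℝ) ≤ V₁n m₁ * ((j:ℝ)+1) := by
        have h' := mul_le_mul_of_nonneg_left hΔlb
          (by positivity : (0:ℝ) ≤ (i:ℝ))
        have h'' : (i:ℝ) * (1/((j:ℝ)+1)) ≤ V₁n m₁ := by linarith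
        rw [mul_one_div, div_le_iff₀ (by linarith : (0:ℝ) < (j:ℝ)+1)] at h''
        linarith
      have hiD : (i:ℝ)*(Δ' - Δ) ≤ V₁n m₁/(j:ℝ) ∧ (i:ℝ)*(Δ - Δ') ≤ V₁n m₁/(j:ℝ) := by
        have hDval : 1/(j:ℝ) - 1/((j:ℝ)+1) = 1/((j:ℝ)*((j:ℝ)+1)) := by
          field_simp
          ring
        have hiD0 : (i:ℝ) * (1/((j:ℝ)*((j:ℝ)+1))) ≤ V₁n m₁/(j:ℝ) := by
          rw [mul_one_div, div_le_div_iff₀ (by positivity) hjpos']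
          have hmul := mul_le_mul_of_nonneg_right hiMj hjpos'.le
          linarith only [hmul]
        constructor
        · calc (i:ℝ)*(Δ' - Δ) ≤ (i:ℝ)*(1/(j:ℝ) - 1/((j:ℝ)+1)) :=
            mul_le_mul_of_nonneg_left hDle (by positivity)
          _ = (i:ℝ) * (1/((j:ℝ)*((j:ℝ)+1))) := by rw [hDval]
          _ ≤ V₁n m₁/(j:ℝ) := hiD0
        · calc (i:ℝ)*(Δ - Δ') ≤ (i:ℝ)*(1/(j:ℝ) - 1/((j:ℝ)+1)) :=
            mul_le_mul_of_nonneg_left hDle' (by positivity)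
          _ = (i:ℝ) * (1/((j:ℝ)*((j:ℝ)+1))) := by rw [hDval]
          _ ≤ V₁n m₁/(j:ℝ) := hiD0
      have hfin : V₁n m₁/(j:ℝ) + 1/(j:ℝ) ≤ ε := by
        rw [← add_div, div_le_iff₀ hjpos']
        have := abs_nonneg (V₁n a)
        linarith
      refine abs_le.2 ⟨?_, ?_⟩
      · -- -ε ≤ V₁s a - V₁n a
        have hub : V₁n a - V₁s a ≤ (i:ℝ)*(Δ - Δ') + Δ := by linarith
        have : Δ ≤ 1/(j:ℝ) := hΔub
        linarith [hiD.2]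
      · have hub : V₁s a - V₁n a ≤ (i:ℝ)*(Δ' - Δ) + Δ' := by linarith
        linarith [hiD.1, hΔ'ub]
    · -- the case  a ≺₁ r0 : descending standard sequence
      have hgea : Ge1 R r0 a := ge1_of_not_ge1 h1 h2 hTpos
      have hT1 : V₁n a ≤ 0 := by
        have := (NR r0 W.2 a W.2 (mN _ _ hWr0 (ge2_refl h1 W.2))
          (mN _ _ hWa (ge2_refl h1 W.2))).1 (hgea W.2)
        linarith
      have hTlt : V₁n a < 0 := by
        rcases lt_or_eq_of_le hT1 with h | h
        · exact h
        · exfalso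
          have hip : IP R (a, W.2) (r0, W.2) :=
            (NIP _ _ _ _ (mN _ _ hWa (ge2_refl h1 W.2))
              (mN _ _ hWr0 (ge2_refl h1 W.2))).2 (by linarith)
          exact hTpos (eq1_of_ip_NW h1 h9 hWNW (mN _ _ hWa (ge2_refl h1 W.2))
            (mN _ _ hWr0 (ge2_refl h1 W.2)) hip).1
      -- descending one-step extension
      have hspbq : ∀ b : X₁, Ge1 R W.1 b → SP R (b,p) (b,q) := by
        intro b hWb
        refine (NSP _ _ _ _ (mN _ _ hWb hpτ) (mN _ _ hWb hqτ)).2 ?_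
        have := hΔdef; linarith
      have ext2 : ∀ (b : X₁) (i : ℕ), Ge1 R r0 b → Ge1 R b a → V₁n b = -((i:ℝ) * Δ) →
          V₁n a ≤ -(((i:ℝ)+1) * Δ) →
          ∃ c, IP R (b,q) (c,p) ∧ Ge1 R b c ∧ Ge1 R c a := by
        intro b i hr0b hba hnb hiT
        have hWb : Ge1 R W.1 b := ge1_trans h1 hWr0 hr0b
        have hWa' : Ge1 R W.1 a := hWa
        have hu' : R (b,p) (b,q) := (hspbq b hWb).1
        have hl' : R (b,q) (a,p) := by
          refine (NR _ _ _ _ (mN _ _ hWb hqτ) (mN _ _ hWa' hpτ)).2 ?_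
          have := hΔdef; linarith
        obtain ⟨c₀, hc₀⟩ := h8.2 p b a (b,q) hu' hl'
        have hbc₀ : Ge1 R b c₀ := by
          by_contra hcc
          have hge := ge1_of_not_ge1 h1 h2 hcc
          exact (hspbq b hWb).2 (h1.2 _ _ _ hc₀.2 (hge p))
        by_cases hca : Ge1 R c₀ a
        · exact ⟨c₀, ip_symm hc₀, hbc₀, hca⟩
        · have hge := ge1_of_not_ge1 h1 h2 hca
          exact ⟨a, ⟨hl', h1.2 _ _ _ (hge p) hc₀.1⟩, hba, ge1_refl h1 a⟩
      -- the descending sequence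
      set φ₂ : X₁ → X₁ := fun b =>
        if h : ∃ c, IP R (b,q) (c,p) ∧ Ge1 R b c ∧ Ge1 R c a then h.choose else b
        with hφ₂def
      have hφ₂ : ∀ b, (∃ c, IP R (b,q) (c,p) ∧ Ge1 R b c ∧ Ge1 R c a) →
          IP R (b,q) (φ₂ b, p) ∧ Ge1 R b (φ₂ b) ∧ Ge1 R (φ₂ b) a := by
        intro b h
        rw [hφ₂def]
        simp only [dif_pos h]
        exact h.choose_spec
      set g₂ : ℕ → X₁ := fun n => φ₂^[n] r0 with hg₂def
      have hg₂0 : g₂ 0 = r0 := by rw [hg₂def]; rfl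
      have hg₂s : ∀ i, g₂ (i+1) = φ₂ (g₂ i) := by
        intro i; rw [hg₂def]; exact Function.iterate_succ_apply' φ₂ i r0
      clear_value φ₂ g₂
      set K₂ : ℕ := ⌊(-V₁n a)/Δ⌋₊ with hK₂def
      have hK₂1 : (K₂:ℝ) * Δ ≤ -V₁n a := by
        have h := Nat.floor_le (div_nonneg (by linarith : (0:ℝ) ≤ -V₁n a) hΔpos.le)
        rw [← hK₂def] at h
        exact (le_div_iff₀ hΔpos).1 h
      have hK₂2 : -V₁n a < ((K₂:ℝ)+1) * Δ := by
        have h := Nat.lt_floor_add_one ((-V₁n a)/Δ)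
        rw [← hK₂def] at h
        exact (div_lt_iff₀ hΔpos).1 h
      clear_value K₂
      have inv2 : ∀ i : ℕ, i ≤ K₂ →
          Ge1 R r0 (g₂ i) ∧ Ge1 R (g₂ i) a ∧ V₁n (g₂ i) = -((i:ℝ) * Δ) := by
        intro i
        induction i with
        | zero =>
          intro _
          refine ⟨by rw [hg₂0]; exact ge1_refl h1 r0, by rw [hg₂0]; exact hgea, ?_⟩
          rw [hg₂0, h0n]; simp
        | succ i ih =>
          intro hle
          have hi := ih (Nat.le_of_succ_le hle)
          have hcont : V₁n a ≤ -(((i:ℝ)+1) * Δ) := by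
            have h' : ((i:ℝ)+1) ≤ (K₂:ℝ) := by exact_mod_cast Nat.cast_le.2 hle
            have h'' := mul_le_mul_of_nonneg_right h' hΔpos.le
            linarith [hK₂1]
          have hstep := hφ₂ (g₂ i) (ext2 (g₂ i) i hi.1 hi.2.1 hi.2.2 hcont)
          rw [← hg₂s i] at hstep
          refine ⟨ge1_trans h1 hi.1 hstep.2.1, hstep.2.2, ?_⟩
          have hWgi : Ge1 R W.1 (g₂ i) := ge1_trans h1 hWr0 hi.1
          have hWgi1 : Ge1 R W.1 (g₂ (i+1)) :=
            ge1_trans h1 hWgi hstep.2.1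
          have hv := (NIP _ _ _ _ (mN _ _ hWgi hqτ) (mN _ _ hWgi1 hpτ)).1 hstep.1
          have := hΔdef
          push_cast
          linarith [hi.2.2]
      have gstep2 : ∀ i : ℕ, i < K₂ → IP R ((g₂ i),q) ((g₂ (i+1)),p) := by
        intro i hiK
        have hi := inv2 i (le_of_lt hiK)
        have hcont : V₁n a ≤ -(((i:ℝ)+1) * Δ) := by
          have h' : ((i:ℝ)+1) ≤ (K₂:ℝ) := by exact_mod_cast Nat.cast_le.2 hiK
          have h'' := mul_le_mul_of_nonneg_right h' hΔpos.le
          linarith [hK₂1]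
        have hstep := hφ₂ (g₂ i) (ext2 (g₂ i) i hi.1 hi.2.1 hi.2.2 hcont)
        rw [← hg₂s i] at hstep
        exact hstep.1
      have sval2 : ∀ i : ℕ, i ≤ K₂ → V₁s (g₂ i) = -((i:ℝ) * Δ') := by
        intro i
        induction i with
        | zero => intro _; rw [hg₂0, h0s]; simp
        | succ i ih =>
          intro hle
          have hi := ih (Nat.le_of_succ_le hle)
          have hiK : i < K₂ := Nat.lt_of_succ_le hle
          have hZi : Ge1 R (g₂ i) Z.1 :=
            ge1_trans h1 (inv2 i (le_of_lt hiK)).2.1 haZ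
          have hZi1 : Ge1 R (g₂ (i+1)) Z.1 :=
            ge1_trans h1 (inv2 (i+1) hle).2.1 haZ
          have hWi : Ge1 R W.1 (g₂ i) := ge1_trans h1 hWr0 (inv2 i (le_of_lt hiK)).1
          have hWi1 : Ge1 R W.1 (g₂ (i+1)) := ge1_trans h1 hWr0 (inv2 (i+1) hle).1
          have := transferNW (g₂ (i+1)) (g₂ i) hZi1 hZi hWi1 hWi (gstep2 i hiK)
          rw [hi] at this
          push_cast
          linarith
      -- bracketing a at the bottom of the descending sequence
      have hgK2Z : Ge1 R (g₂ K₂) Z.1 := ge1_trans h1 (inv2 K₂ le_rfl).2.1 haZ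
      have hWgK2 : Ge1 R W.1 (g₂ K₂) := ge1_trans h1 hWr0 (inv2 K₂ le_rfl).1
      have hupp2 : V₁s a ≤ -((K₂:ℝ)*Δ') := by
        have h' : V₁s a ≤ V₁s (g₂ K₂) := by
          refine monoNS a (g₂ K₂) haZ hgK2Z hWa hWgK2 ?_
          rw [(inv2 K₂ le_rfl).2.2]; linarith [hK₂1]
        rw [sval2 K₂ le_rfl] at h'
        exact h'
      have hlow2 : -(((K₂:ℝ)+1)*Δ') ≤ V₁s a := by
        by_contra hc2
        push_neg at hc2
        have hsv2 : V₁s (g₂ K₂) = -((K₂:ℝ)*Δ') := sval2 K₂ le_rfl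
        have hu2 : R ((g₂ K₂), Z.2) ((g₂ K₂), q'') := by
          refine (SR _ _ _ _ (mS _ _ hgK2Z (ge2_refl h1 Z.2)) (mS _ _ hgK2Z hq''σ)).2 ?_
          have := hΔ'def; linarith
        have hl2 : R ((g₂ K₂), q'') (a, Z.2) := by
          refine (SR _ _ _ _ (mS _ _ hgK2Z hq''σ) (mS _ _ haZ (ge2_refl h1 Z.2))).2 ?_
          rw [hsv2]
          have := hΔ'def
          linarith
        obtain ⟨c₀, hc₀⟩ := h8.2 Z.2 (g₂ K₂) a ((g₂ K₂), q'') hu2 hl2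
        obtain ⟨c, hcip, hc_a⟩ : ∃ c, IP R (c,Z.2) ((g₂ K₂),q'') ∧ Ge1 R c a := by
          by_cases hrc : Ge1 R c₀ a
          · exact ⟨c₀, hc₀, hrc⟩
          · have hge := ge1_of_not_ge1 h1 h2 hrc
            exact ⟨a, ⟨h1.2 _ _ _ (hge Z.2) hc₀.1, hl2⟩, ge1_refl h1 a⟩
        have hsp2 : SP R ((g₂ K₂),Z.2) ((g₂ K₂),q'') := by
          refine (SSP _ _ _ _ (mS _ _ hgK2Z (ge2_refl h1 Z.2)) (mS _ _ hgK2Z hq''σ)).2 ?_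
          have := hΔ'def; linarith
        have hgc : Ge1 R (g₂ K₂) c :=
          fun u => h2.1 _ _ Z.2 (sp_ip_trans h1 hsp2 (ip_symm hcip)) u
        have hcZ2 : Ge1 R c Z.1 := ge1_trans h1 hc_a haZ
        have hWc2 : Ge1 R W.1 c := ge1_trans h1 hWgK2 hgc
        have hnc := transferSE c (g₂ K₂) hcZ2 hgK2Z hWc2 hWgK2 (ip_symm hcip)
        rw [(inv2 K₂ le_rfl).2.2] at hnc
        have hle2 : V₁n a ≤ V₁n c := by
          have := (NR c W.2 a W.2 (mN _ _ hWc2 (ge2_refl h1 W.2))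
            (mN _ _ hWa (ge2_refl h1 W.2))).1 (hc_a W.2)
          linarith
        linarith [hK₂2]
      -- the final estimate in this case
      have hK₂j : (K₂:ℝ) ≤ (-V₁n a) * ((j:ℝ)+1) := by
        have h' := mul_le_mul_of_nonneg_left hΔlb
          (by positivity : (0:ℝ) ≤ (K₂:ℝ))
        have h'' : (K₂:ℝ) * (1/((j:ℝ)+1)) ≤ -V₁n a := by linarith [hK₂1]
        rw [mul_one_div, div_le_iff₀ (by linarith : (0:ℝ) < (j:ℝ)+1)] at h''
        linarith
      have hKD : (K₂:ℝ)*(Δ' - Δ) ≤ (-V₁n a)/(j:ℝ) ∧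
          (K₂:ℝ)*(Δ - Δ') ≤ (-V₁n a)/(j:ℝ) := by
        have hDval : 1/(j:ℝ) - 1/((j:ℝ)+1) = 1/((j:ℝ)*((j:ℝ)+1)) := by
          field_simp
          ring
        have hiD0 : (K₂:ℝ) * (1/((j:ℝ)*((j:ℝ)+1))) ≤ (-V₁n a)/(j:ℝ) := by
          rw [mul_one_div, div_le_div_iff₀ (by positivity) hjpos']
          have hmul := mul_le_mul_of_nonneg_right hK₂j hjpos'.le
          linarith only [hmul]
        constructor
        · calc (K₂:ℝ)*(Δ' - Δ) ≤ (K₂:ℝ)*(1/(j:ℝ) - 1/((j:ℝ)+1)) :=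
            mul_le_mul_of_nonneg_left hDle (by positivity)
          _ = (K₂:ℝ) * (1/((j:ℝ)*((j:ℝ)+1))) := by rw [hDval]
          _ ≤ (-V₁n a)/(j:ℝ) := hiD0
        · calc (K₂:ℝ)*(Δ - Δ') ≤ (K₂:ℝ)*(1/(j:ℝ) - 1/((j:ℝ)+1)) :=
            mul_le_mul_of_nonneg_left hDle' (by positivity)
          _ = (K₂:ℝ) * (1/((j:ℝ)*((j:ℝ)+1))) := by rw [hDval]
          _ ≤ (-V₁n a)/(j:ℝ) := hiD0
      have hfin2 : (-V₁n a)/(j:ℝ) + 1/(j:ℝ) ≤ ε := by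
        rw [← add_div, div_le_iff₀ hjpos']
        have h1' : -V₁n a ≤ |V₁n a| := neg_le_abs _
        linarith
      refine abs_le.2 ⟨?_, ?_⟩
      · have hub : V₁n a - V₁s a ≤ (K₂:ℝ)*(Δ' - Δ) + Δ' := by linarith
        linarith [hKD.1, hΔ'ub]
      · have hub : V₁s a - V₁n a ≤ (K₂:ℝ)*(Δ - Δ') + Δ := by linarith
        linarith [hKD.2, hΔub]
  by_contra hne
  have h0' : 0 < |V₁s a - V₁n a| := abs_pos.2 (sub_ne_zero.2 hne)
  have hk := key (|V₁s a - V₁n a|/2) (half_pos h0')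
  exact absurd hk (not_le.2 (half_lt_self h0'))
end

section
/- Suppose ≽ satisfies A1 (weak order), weak separability (A2), A3, A4, restricted solvability (A8), the Archimedean axiom (A9), and order density, and suppose both coordinates are essential on SE and on NW. Let SE* = ⋃_{z ∈ Θ \ SE_ext} SE(z) and NW* = ⋃_{z ∈ Θ \ NW_ext} NW(z); let D₁ = {a ∈ X₁ : (∃p, ap ∈ SE*) and (∃q, aq ∈ NW*)} and D₂ = {p ∈ X₂ : (∃a, ap ∈ SE*) and (∃b, bp ∈ NW*)}. Suppose (V₁ˢ,V₂ˢ) additively represents ≽ on SE(z) for every z ∈ Θ \ SE_ext, (V₁ⁿ,V₂ⁿ) additively represents ≽ on NW(z) for every z ∈ Θ \ NW_ext, V₁ˢ(a) = V₁ⁿ(a) for every a ∈ D₁ with V₁ˢ nonconstant on D₁, and V₂ˢ(r) = V₂ⁿ(r) = 0 for some r ∈ D₂. Then there exists λ > 0 such that V₂ˢ(p) = λ·V₂ⁿ(p) for every p ∈ D₂. -/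
open Set
open scoped Classical

namespace AlignAux

set_option linter.unusedSectionVars false

variable {X₁ X₂ : Type*} {R : X₁ × X₂ → X₁ × X₂ → Prop}
variable {V₁s : X₁ → ℝ} {V₂s : X₂ → ℝ} {V₁n : X₁ → ℝ} {V₂n : X₂ → ℝ}

lemma rrefl (h1 : A1 R) (x : X₁ × X₂) : R x x := (h1.1 x x).elim id id

lemma ge1_refl (h1 : A1 R) (a : X₁) : Ge1 R a a := fun _ => rrefl h1 _

lemma ge2_refl (h1 : A1 R) (p : X₂) : Ge2 R p p := fun _ => rrefl h1 _

lemma ge1_trans (h1 : A1 R) {a b c : X₁} (hab : Ge1 R a b) (hbc : Ge1 R b c) :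
    Ge1 R a c := fun p => h1.2 _ _ _ (hab p) (hbc p)

lemma ge2_trans (h1 : A1 R) {p q s : X₂} (hpq : Ge2 R p q) (hqs : Ge2 R q s) :
    Ge2 R p s := fun a => h1.2 _ _ _ (hpq a) (hqs a)

lemma ge1_total (h1 : A1 R) (h2 : A2 R) (a b : X₁) : Ge1 R a b ∨ Ge1 R b a := by
  by_cases h : Ge1 R a b
  · exact Or.inl h
  · obtain ⟨p, hp⟩ := not_forall.mp h
    exact Or.inr (h2.1 b a p ⟨(h1.1 _ _).resolve_left hp, hp⟩)

lemma ge2_total (h1 : A1 R) (h2 : A2 R) (p q : X₂) : Ge2 R p q ∨ Ge2 R q p := by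
  by_cases h : Ge2 R p q
  · exact Or.inl h
  · obtain ⟨a, ha⟩ := not_forall.mp h
    exact Or.inr (h2.2 q p a ⟨(h1.1 _ _).resolve_left ha, ha⟩)

lemma sez_subset (h1 : A1 R) {z : X₁ × X₂} (hz : z ∈ Theta R \ SEext R) :
    SEz R z ⊆ SEreg R := by
  obtain ⟨hzT, hzE⟩ := hz
  have hzS : z ∈ SEreg R := hzT.1
  rcases hzS with ⟨z', h₁, h₂, h₃, h₄⟩ | ⟨hd, _⟩
  · intro x hx
    exact Or.inl ⟨z', h₁, h₂, h₃, ge1_trans h1 hx.1 h₄.1, ge2_trans h1 h₄.2 hx.2⟩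
  · exact absurd ⟨hzT, hd.elim Or.inr Or.inl⟩ hzE

lemma nwz_subset (h1 : A1 R) {z : X₁ × X₂} (hz : z ∈ Theta R \ NWext R) :
    NWz R z ⊆ NWreg R := by
  obtain ⟨hzT, hzE⟩ := hz
  have hzN : z ∈ NWreg R := hzT.2
  rcases hzN with ⟨z', h₁, h₂, h₃, h₄⟩ | ⟨hd, _⟩
  · intro x hx
    exact Or.inl ⟨z', h₁, h₂, h₃, ge2_trans h1 hx.1 h₄.1, ge1_trans h1 h₄.2 hx.2⟩
  · exact absurd ⟨hzT, hd⟩ hzE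

lemma rep_SE (hs : ∀ z ∈ Theta R \ SEext R, AddRep R V₁s V₂s (SEz R z))
    {z : X₁ × X₂} (hz : z ∈ Theta R \ SEext R) {e f : X₁} {x y : X₂}
    (he : Ge1 R e z.1) (hf : Ge1 R f z.1) (hx : Ge2 R z.2 x) (hy : Ge2 R z.2 y) :
    R (e, x) (f, y) ↔ V₁s f + V₂s y ≤ V₁s e + V₂s x :=
  hs z hz (e, x) ⟨he, hx⟩ (f, y) ⟨hf, hy⟩

lemma rep_NW (hn : ∀ z ∈ Theta R \ NWext R, AddRep R V₁n V₂n (NWz R z))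
    {ζ : X₁ × X₂} (hζ : ζ ∈ Theta R \ NWext R) {e f : X₁} {x y : X₂}
    (he : Ge1 R ζ.1 e) (hf : Ge1 R ζ.1 f) (hx : Ge2 R x ζ.2) (hy : Ge2 R y ζ.2) :
    R (e, x) (f, y) ↔ V₁n f + V₂n y ≤ V₁n e + V₂n x :=
  hn ζ hζ (e, x) ⟨hx, he⟩ (f, y) ⟨hy, hf⟩


section Ord

variable (h1 : A1 R) (h2 : A2 R) (h4 : A4 R)
variable (hE2s : Ess2 R (SEreg R)) (hE2n : Ess2 R (NWreg R))
variable (hs : ∀ z ∈ Theta R \ SEext R, AddRep R V₁s V₂s (SEz R z))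
variable (hn : ∀ z ∈ Theta R \ NWext R, AddRep R V₁n V₂n (NWz R z))
variable {z ζ : X₁ × X₂} (hz : z ∈ Theta R \ SEext R) (hζ : ζ ∈ Theta R \ NWext R)

include h1 h4 hE2s hs hn hz hζ in
lemma ord_mp {x y : X₂} (hx : Ge2 R z.2 x) (hy : Ge2 R z.2 y)
    (hx' : Ge2 R x ζ.2) (hy' : Ge2 R y ζ.2) (h : V₂s x ≤ V₂s y) :
    V₂n x ≤ V₂n y := by
  have hzx : (z.1, x) ∈ SEreg R := sez_subset h1 hz ⟨ge1_refl h1 _, hx⟩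
  have hzy : (z.1, y) ∈ SEreg R := sez_subset h1 hz ⟨ge1_refl h1 _, hy⟩
  have hζx : (ζ.1, x) ∈ NWreg R := nwz_subset h1 hζ ⟨hx', ge1_refl h1 _⟩
  have hζy : (ζ.1, y) ∈ NWreg R := nwz_subset h1 hζ ⟨hy', ge1_refl h1 _⟩
  have prem : R (z.1, y) (z.1, x) :=
    (rep_SE hs hz (ge1_refl h1 _) (ge1_refl h1 _) hy hx).mpr (by linarith)
  rcases h1.1 (ζ.1, y) (ζ.1, x) with hyx | hxy
  · have := (rep_NW hn hζ (ge1_refl h1 _) (ge1_refl h1 _) hy' hx').mp hyx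
    linarith
  · have concl := h4 z.1 z.1 ζ.1 ζ.1 x y y x
      (Or.inr (Or.inr (Or.inr (Or.inl
        ⟨⟨hzx, hzy, hzy, hzx⟩, hE2s, hζx, hζy, hζy, hζx⟩))))
      prem prem hxy
    have := (rep_NW hn hζ (ge1_refl h1 _) (ge1_refl h1 _) hy' hx').mp concl
    linarith

include h1 h4 hE2n hs hn hz hζ in
lemma ord_mpr {x y : X₂} (hx : Ge2 R z.2 x) (hy : Ge2 R z.2 y)
    (hx' : Ge2 R x ζ.2) (hy' : Ge2 R y ζ.2) (h : V₂n x ≤ V₂n y) :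
    V₂s x ≤ V₂s y := by
  have hzx : (z.1, x) ∈ SEreg R := sez_subset h1 hz ⟨ge1_refl h1 _, hx⟩
  have hzy : (z.1, y) ∈ SEreg R := sez_subset h1 hz ⟨ge1_refl h1 _, hy⟩
  have hζx : (ζ.1, x) ∈ NWreg R := nwz_subset h1 hζ ⟨hx', ge1_refl h1 _⟩
  have hζy : (ζ.1, y) ∈ NWreg R := nwz_subset h1 hζ ⟨hy', ge1_refl h1 _⟩
  have prem : R (ζ.1, y) (ζ.1, x) :=
    (rep_NW hn hζ (ge1_refl h1 _) (ge1_refl h1 _) hy' hx').mpr (by linarith)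
  rcases h1.1 (z.1, y) (z.1, x) with hyx | hxy
  · have := (rep_SE hs hz (ge1_refl h1 _) (ge1_refl h1 _) hy hx).mp hyx
    linarith
  · have concl := h4 ζ.1 ζ.1 z.1 z.1 x y y x
      (Or.inr (Or.inr (Or.inl
        ⟨⟨hζx, hζy, hζy, hζx⟩, hE2n, hzx, hzy, hzy, hzx⟩)))
      prem prem hxy
    have := (rep_SE hs hz (ge1_refl h1 _) (ge1_refl h1 _) hy hx).mp concl
    linarith

include h1 h4 hE2s hE2n hs hn hz hζ in
lemma ord_iff {x y : X₂} (hx : Ge2 R z.2 x) (hy : Ge2 R z.2 y)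
    (hx' : Ge2 R x ζ.2) (hy' : Ge2 R y ζ.2) :
    V₂s x ≤ V₂s y ↔ V₂n x ≤ V₂n y :=
  ⟨ord_mp h1 h4 hE2s hs hn hz hζ hx hy hx' hy',
   ord_mpr h1 h4 hE2n hs hn hz hζ hx hy hx' hy'⟩

include h1 h4 hE2s hE2n hs hn hz hζ in
lemma ord_lt {x y : X₂} (hx : Ge2 R z.2 x) (hy : Ge2 R z.2 y)
    (hx' : Ge2 R x ζ.2) (hy' : Ge2 R y ζ.2) (h : V₂s x < V₂s y) :
    V₂n x < V₂n y := by
  have h₁ := ord_mp h1 h4 hE2s hs hn hz hζ hx hy hx' hy' h.le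
  rcases h₁.lt_or_eq with h' | h'
  · exact h'
  · exfalso
    have := ord_mpr h1 h4 hE2n hs hn hz hζ hy hx hy' hx' (le_of_eq h'.symm)
    linarith

include h1 h4 hE2s hE2n hs hn hz hζ in
lemma ord_eq {x y : X₂} (hx : Ge2 R z.2 x) (hy : Ge2 R z.2 y)
    (hx' : Ge2 R x ζ.2) (hy' : Ge2 R y ζ.2) (h : V₂s x = V₂s y) :
    V₂n x = V₂n y :=
  le_antisymm (ord_mp h1 h4 hE2s hs hn hz hζ hx hy hx' hy' h.le)
    (ord_mp h1 h4 hE2s hs hn hz hζ hy hx hy' hx' h.ge)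

end Ord

section Live

variable (h1 : A1 R) (h2 : A2 R) (h9 : A9 R)

include h1 h2 h9 in
lemma live_SE (hs : ∀ z ∈ Theta R \ SEext R, AddRep R V₁s V₂s (SEz R z))
    {z : X₁ × X₂} (hz : z ∈ Theta R \ SEext R) :
    ∃ e, Ge1 R e z.1 ∧ V₁s z.1 < V₁s e := by
  obtain ⟨hzT, hzE⟩ := hz
  have hnm : ¬ Max1 R z.1 := fun hm => hzE ⟨hzT, Or.inr hm⟩
  obtain ⟨c, hc⟩ := not_forall.mp hnm
  have hge : Ge1 R c z.1 := (ge1_total h1 h2 c z.1).resolve_right hc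
  refine ⟨c, hge, ?_⟩
  have hczm : (c, z.2) ∈ SEz R z := ⟨hge, ge2_refl h1 _⟩
  have hzzm : (z.1, z.2) ∈ SEz R z := ⟨ge1_refl h1 _, ge2_refl h1 _⟩
  have hle : V₁s z.1 ≤ V₁s c := by
    have := (hs z ⟨hzT, hzE⟩ _ hczm _ hzzm).mp (hge z.2)
    linarith
  rcases hle.lt_or_eq with h | h
  · exact h
  · exfalso
    have hIP : IP R (z.1, z.2) (c, z.2) :=
      ⟨(hs z ⟨hzT, hzE⟩ _ hzzm _ hczm).mpr (by linarith), hge z.2⟩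
    have hfin := h9.2.2.2 z hzT.1 Set.univ (fun _ => z.2) z.1 c
      ⟨fun _ _ _ _ _ _ _ => trivial, fun hand => hc hand.1, fun _ _ _ => hIP⟩
      ⟨(z.1, z.2), (z.1, z.2), fun _ _ => ⟨rrefl h1 _, rrefl h1 _⟩⟩
      (fun _ _ => ⟨hzzm, hczm⟩)
    exact Set.infinite_univ hfin

include h1 h2 h9 in
lemma live_NW (hn : ∀ z ∈ Theta R \ NWext R, AddRep R V₁n V₂n (NWz R z))
    {ζ : X₁ × X₂} (hζ : ζ ∈ Theta R \ NWext R) :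
    ∃ e, Ge1 R ζ.1 e ∧ V₁n e < V₁n ζ.1 := by
  obtain ⟨hζT, hζE⟩ := hζ
  have hnm : ¬ Min1 R ζ.1 := fun hm => hζE ⟨hζT, Or.inl hm⟩
  obtain ⟨c, hc⟩ := not_forall.mp hnm
  have hge : Ge1 R ζ.1 c := (ge1_total h1 h2 ζ.1 c).resolve_right hc
  refine ⟨c, hge, ?_⟩
  have hczm : (c, ζ.2) ∈ NWz R ζ := ⟨ge2_refl h1 _, hge⟩
  have hζζm : (ζ.1, ζ.2) ∈ NWz R ζ := ⟨ge2_refl h1 _, ge1_refl h1 _⟩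
  have hle : V₁n c ≤ V₁n ζ.1 := by
    have := (hn ζ ⟨hζT, hζE⟩ _ hζζm _ hczm).mp (hge ζ.2)
    linarith
  rcases hle.lt_or_eq with h | h
  · exact h
  · exfalso
    have hIP : IP R (ζ.1, ζ.2) (c, ζ.2) :=
      ⟨hge ζ.2, (hn ζ ⟨hζT, hζE⟩ _ hczm _ hζζm).mpr (by linarith)⟩
    have hfin := h9.2.2.1 ζ hζT.2 Set.univ (fun _ => ζ.2) ζ.1 c
      ⟨fun _ _ _ _ _ _ _ => trivial, fun hand => hc hand.2, fun _ _ _ => hIP⟩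
      ⟨(ζ.1, ζ.2), (ζ.1, ζ.2), fun _ _ => ⟨rrefl h1 _, rrefl h1 _⟩⟩
      (fun _ _ => ⟨hζζm, hczm⟩)
    exact Set.infinite_univ hfin

end Live


section Measure

variable (h1 : A1 R) (h2 : A2 R) (h4 : A4 R) (h8 : A8 R)
variable (hE2s : Ess2 R (SEreg R)) (hE2n : Ess2 R (NWreg R))
variable (hs : ∀ z ∈ Theta R \ SEext R, AddRep R V₁s V₂s (SEz R z))
variable (hn : ∀ z ∈ Theta R \ NWext R, AddRep R V₁n V₂n (NWz R z))
variable {z ζ : X₁ × X₂} (hz : z ∈ Theta R \ SEext R) (hζ : ζ ∈ Theta R \ NWext R)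

include h1 hs hz in
lemma mono_u (hxy : Ge2 R x y) (hx : Ge2 R z.2 x) (hy : Ge2 R z.2 y) :
    V₂s y ≤ V₂s x := by
  have := (rep_SE hs hz (ge1_refl h1 _) (ge1_refl h1 _) hx hy).mp (hxy z.1)
  linarith

include h1 hn hζ in
lemma mono_w (hxy : Ge2 R x y) (hx : Ge2 R x ζ.2) (hy : Ge2 R y ζ.2) :
    V₂n y ≤ V₂n x := by
  have := (rep_NW hn hζ (ge1_refl h1 _) (ge1_refl h1 _) hx hy).mp (hxy ζ.1)
  linarith

include h1 h2 h8 hs hz in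
lemma realize_SE {e : X₁} {x y : X₂}
    (he : Ge1 R e z.1) (hx : Ge2 R z.2 x) (hy : Ge2 R z.2 y)
    (h0 : 0 < V₂s x - V₂s y) (hle : V₂s x - V₂s y ≤ V₁s e - V₁s z.1) :
    ∃ b, Ge1 R b z.1 ∧ V₁s b = V₁s z.1 + (V₂s x - V₂s y) := by
  have hupper : R (e, y) (z.1, x) :=
    (rep_SE hs hz he (ge1_refl h1 _) hy hx).mpr (by linarith)
  have hlower : R (z.1, x) (z.1, y) :=
    (rep_SE hs hz (ge1_refl h1 _) (ge1_refl h1 _) hx hy).mpr (by linarith)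
  obtain ⟨b, hb1, hb2⟩ := h8.2 y e z.1 (z.1, x) hupper hlower
  have hnot : ¬ R (z.1, y) (z.1, x) := fun hcon => by
    have := (rep_SE hs hz (ge1_refl h1 _) (ge1_refl h1 _) hy hx).mp hcon
    linarith
  have hSP : SP R (b, y) (z.1, y) :=
    ⟨h1.2 _ _ _ hb1 hlower, fun hcon => hnot (h1.2 _ _ _ hcon hb1)⟩
  have hgeb : Ge1 R b z.1 := h2.1 b z.1 y hSP
  refine ⟨b, hgeb, ?_⟩
  have e1 := (rep_SE hs hz hgeb (ge1_refl h1 _) hy hx).mp hb1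
  have e2 := (rep_SE hs hz (ge1_refl h1 _) hgeb hx hy).mp hb2
  linarith

include h1 h2 h8 hn hζ in
lemma realize_NW {e : X₁} {x y : X₂}
    (he : Ge1 R ζ.1 e) (hx : Ge2 R x ζ.2) (hy : Ge2 R y ζ.2)
    (h0 : 0 < V₂n x - V₂n y) (hle : V₂n x - V₂n y ≤ V₁n ζ.1 - V₁n e) :
    ∃ d, Ge1 R ζ.1 d ∧ V₁n d = V₁n ζ.1 - (V₂n x - V₂n y) := by
  have hupper : R (ζ.1, x) (ζ.1, y) :=
    (rep_NW hn hζ (ge1_refl h1 _) (ge1_refl h1 _) hx hy).mpr (by linarith)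
  have hlower : R (ζ.1, y) (e, x) :=
    (rep_NW hn hζ (ge1_refl h1 _) he hy hx).mpr (by linarith)
  obtain ⟨d, hd1, hd2⟩ := h8.2 x ζ.1 e (ζ.1, y) hupper hlower
  have hnot : ¬ R (ζ.1, y) (ζ.1, x) := fun hcon => by
    have := (rep_NW hn hζ (ge1_refl h1 _) (ge1_refl h1 _) hy hx).mp hcon
    linarith
  have hSP : SP R (ζ.1, x) (d, x) :=
    ⟨h1.2 _ _ _ hupper hd2, fun hcon => hnot (h1.2 _ _ _ hd2 hcon)⟩
  have hged : Ge1 R ζ.1 d := h2.1 ζ.1 d x hSP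
  refine ⟨d, hged, ?_⟩
  have e1 := (rep_NW hn hζ (ge1_refl h1 _) hged hy hx).mp hd2
  have e2 := (rep_NW hn hζ hged (ge1_refl h1 _) hx hy).mp hd1
  linarith

variable {ee dd : X₁} {x₀ y₀ : X₂}

include h1 h4 hE2s hs hn hz hζ in
lemma step_le
    (hee : Ge1 R ee z.1) (hdd : Ge1 R ζ.1 dd)
    (hx₀ : Ge2 R z.2 x₀) (hy₀ : Ge2 R z.2 y₀)
    (hx₀' : Ge2 R x₀ ζ.2) (hy₀' : Ge2 R y₀ ζ.2)
    (hσ : V₁s ee = V₁s z.1 + (V₂s x₀ - V₂s y₀))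
    (hτ : V₁n dd = V₁n ζ.1 - (V₂n x₀ - V₂n y₀))
    {t P : X₂} (ht : Ge2 R z.2 t) (hP : Ge2 R z.2 P)
    (ht' : Ge2 R t ζ.2) (hP' : Ge2 R P ζ.2)
    (h : V₂s P - V₂s t ≤ V₂s x₀ - V₂s y₀) :
    V₂n P - V₂n t ≤ V₂n x₀ - V₂n y₀ := by
  have mSE : ∀ (g : X₁) (hg : Ge1 R g z.1) (x : X₂) (hx : Ge2 R z.2 x),
      (g, x) ∈ SEreg R := fun g hg x hx => sez_subset h1 hz ⟨hg, hx⟩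
  have mNW : ∀ (g : X₁) (hg : Ge1 R ζ.1 g) (x : X₂) (hx : Ge2 R x ζ.2),
      (g, x) ∈ NWreg R := fun g hg x hx => nwz_subset h1 hζ ⟨hx, hg⟩
  have prem1 : R (z.1, x₀) (ee, y₀) :=
    (rep_SE hs hz (ge1_refl h1 _) hee hx₀ hy₀).mpr (by linarith)
  have prem2 : R (ee, t) (z.1, P) :=
    (rep_SE hs hz hee (ge1_refl h1 _) ht hP).mpr (by linarith)
  have prem3 : R (ζ.1, y₀) (dd, x₀) :=
    (rep_NW hn hζ (ge1_refl h1 _) hdd hy₀' hx₀').mpr (by linarith)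
  have concl := h4 ee z.1 ζ.1 dd y₀ x₀ t P
    (Or.inr (Or.inr (Or.inr (Or.inl
      ⟨⟨mSE ee hee y₀ hy₀, mSE z.1 (ge1_refl h1 _) x₀ hx₀,
        mSE ee hee t ht, mSE z.1 (ge1_refl h1 _) P hP⟩, hE2s,
       mNW ζ.1 (ge1_refl h1 _) y₀ hy₀', mNW dd hdd x₀ hx₀',
       mNW ζ.1 (ge1_refl h1 _) t ht', mNW dd hdd P hP'⟩))))
    prem1 prem2 prem3
  have := (rep_NW hn hζ (ge1_refl h1 _) hdd ht' hP').mp concl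
  linarith

include h1 h4 hE2s hs hn hz hζ in
lemma step_ge
    (hee : Ge1 R ee z.1) (hdd : Ge1 R ζ.1 dd)
    (hx₀ : Ge2 R z.2 x₀) (hy₀ : Ge2 R z.2 y₀)
    (hx₀' : Ge2 R x₀ ζ.2) (hy₀' : Ge2 R y₀ ζ.2)
    (hσ : V₁s ee = V₁s z.1 + (V₂s x₀ - V₂s y₀))
    (hτ : V₁n dd = V₁n ζ.1 - (V₂n x₀ - V₂n y₀))
    {t P : X₂} (ht : Ge2 R z.2 t) (hP : Ge2 R z.2 P)
    (ht' : Ge2 R t ζ.2) (hP' : Ge2 R P ζ.2)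
    (h : V₂s x₀ - V₂s y₀ ≤ V₂s P - V₂s t) :
    V₂n x₀ - V₂n y₀ ≤ V₂n P - V₂n t := by
  have mSE : ∀ (g : X₁) (hg : Ge1 R g z.1) (x : X₂) (hx : Ge2 R z.2 x),
      (g, x) ∈ SEreg R := fun g hg x hx => sez_subset h1 hz ⟨hg, hx⟩
  have mNW : ∀ (g : X₁) (hg : Ge1 R ζ.1 g) (x : X₂) (hx : Ge2 R x ζ.2),
      (g, x) ∈ NWreg R := fun g hg x hx => nwz_subset h1 hζ ⟨hx, hg⟩
  have prem1 : R (ee, y₀) (z.1, x₀) :=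
    (rep_SE hs hz hee (ge1_refl h1 _) hy₀ hx₀).mpr (by linarith)
  have prem2 : R (z.1, P) (ee, t) :=
    (rep_SE hs hz (ge1_refl h1 _) hee hP ht).mpr (by linarith)
  have prem3 : R (dd, x₀) (ζ.1, y₀) :=
    (rep_NW hn hζ hdd (ge1_refl h1 _) hx₀' hy₀').mpr (by linarith)
  have concl := h4 z.1 ee dd ζ.1 x₀ y₀ P t
    (Or.inr (Or.inr (Or.inr (Or.inl
      ⟨⟨mSE z.1 (ge1_refl h1 _) x₀ hx₀, mSE ee hee y₀ hy₀,
        mSE z.1 (ge1_refl h1 _) P hP, mSE ee hee t ht⟩, hE2s,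
       mNW dd hdd x₀ hx₀', mNW ζ.1 (ge1_refl h1 _) y₀ hy₀',
       mNW dd hdd P hP', mNW ζ.1 (ge1_refl h1 _) t ht'⟩))))
    prem1 prem2 prem3
  have := (rep_NW hn hζ hdd (ge1_refl h1 _) hP' ht').mp concl
  linarith

end Measure


section Chain

variable (h1 : A1 R) (h2 : A2 R) (h4 : A4 R) (h8 : A8 R)
variable (hE2s : Ess2 R (SEreg R)) (hE2n : Ess2 R (NWreg R))
variable (hs : ∀ z ∈ Theta R \ SEext R, AddRep R V₁s V₂s (SEz R z))
variable (hn : ∀ z ∈ Theta R \ NWext R, AddRep R V₁n V₂n (NWz R z))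
variable {z ζ : X₁ × X₂} (hz : z ∈ Theta R \ SEext R) (hζ : ζ ∈ Theta R \ NWext R)
variable {ee dd : X₁} {x₀ y₀ : X₂}

include h1 h2 h4 h8 hE2s hE2n hs hn hz hζ in
lemma chainlem
    (hee : Ge1 R ee z.1) (hdd : Ge1 R ζ.1 dd)
    (hx₀ : Ge2 R z.2 x₀) (hy₀ : Ge2 R z.2 y₀)
    (hx₀' : Ge2 R x₀ ζ.2) (hy₀' : Ge2 R y₀ ζ.2)
    (hσv : V₁s ee = V₁s z.1 + (V₂s x₀ - V₂s y₀))
    (hτv : V₁n dd = V₁n ζ.1 - (V₂n x₀ - V₂n y₀))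
    (hσ0 : 0 < V₂s x₀ - V₂s y₀) (hτ0 : 0 < V₂n x₀ - V₂n y₀)
    {chi : X₂} (hchi : Ge2 R z.2 chi) (hchi' : Ge2 R chi ζ.2) :
    ∀ k : ℕ, ∀ clo : X₂, Ge2 R z.2 clo → Ge2 R clo ζ.2 → Ge2 R chi clo →
      V₂s chi - V₂s clo ≤ (k : ℝ) * (V₂s x₀ - V₂s y₀) →
      |(V₂n chi - V₂n clo) * (V₂s x₀ - V₂s y₀) -
        (V₂s chi - V₂s clo) * (V₂n x₀ - V₂n y₀)|
        ≤ (V₂s x₀ - V₂s y₀) * (V₂n x₀ - V₂n y₀) := by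
  intro k
  induction k with
  | zero =>
    intro clo hc hc' hle hbound
    have hu0 : V₂s clo ≤ V₂s chi := mono_u h1 hs hz hle hchi hc
    have h0 : V₂s chi - V₂s clo = 0 := by
      have : V₂s chi - V₂s clo ≤ 0 := by simpa using hbound
      linarith
    have h0' : V₂n chi = V₂n clo :=
      ord_eq h1 h4 hE2s hE2n hs hn hz hζ hchi hc hchi' hc' (by linarith)
    rw [h0, h0']
    simpa using le_of_lt (mul_pos hσ0 hτ0)
  | succ k IH =>
    intro clo hc hc' hle hbound
    by_cases hcase : V₂s chi - V₂s clo ≤ V₂s x₀ - V₂s y₀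
    · have hwle : V₂n chi - V₂n clo ≤ V₂n x₀ - V₂n y₀ :=
        step_le h1 h4 hE2s hs hn hz hζ hee hdd hx₀ hy₀ hx₀' hy₀' hσv hτv
          hc hchi hc' hchi' hcase
      have hu0 : 0 ≤ V₂s chi - V₂s clo := by
        have := mono_u h1 hs hz hle hchi hc; linarith
      have hw0 : 0 ≤ V₂n chi - V₂n clo := by
        have := mono_w h1 hn hζ hle hchi' hc'; linarith
      rw [abs_le]
      constructor <;> nlinarith
    · push_neg at hcase
      have hub : R (z.1, chi) (ee, clo) :=
        (rep_SE hs hz (ge1_refl h1 _) hee hchi hc).mpr (by linarith)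
      have hlb : R (ee, clo) (z.1, clo) :=
        (rep_SE hs hz hee (ge1_refl h1 _) hc hc).mpr (by linarith)
      obtain ⟨m, hm1, hm2⟩ := h8.1 z.1 chi clo (ee, clo) hub hlb
      have hSPhi : SP R (z.1, chi) (z.1, m) := by
        refine ⟨h1.2 _ _ _ hub hm2, fun hcon => ?_⟩
        have hcc : R (ee, clo) (z.1, chi) := h1.2 _ _ _ hm2 hcon
        have := (rep_SE hs hz hee (ge1_refl h1 _) hc hchi).mp hcc
        linarith
      have hge_chim : Ge2 R chi m := h2.2 chi m z.1 hSPhi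
      have hSPlo : SP R (z.1, m) (z.1, clo) := by
        refine ⟨h1.2 _ _ _ hm1 hlb, fun hcon => ?_⟩
        have hcc : R (z.1, clo) (ee, clo) := h1.2 _ _ _ hcon hm1
        have := (rep_SE hs hz (ge1_refl h1 _) hee hc hc).mp hcc
        linarith
      have hge_mclo : Ge2 R m clo := h2.2 m clo z.1 hSPlo
      have hmz : Ge2 R z.2 m := ge2_trans h1 hchi hge_chim
      have hmζ : Ge2 R m ζ.2 := ge2_trans h1 hge_mclo hc'
      have hum : V₂s m = V₂s clo + (V₂s x₀ - V₂s y₀) := by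
        have e1 := (rep_SE hs hz (ge1_refl h1 _) hee hmz hc).mp hm1
        have e2 := (rep_SE hs hz hee (ge1_refl h1 _) hc hmz).mp hm2
        linarith
      have hwm : V₂n m = V₂n clo + (V₂n x₀ - V₂n y₀) := by
        have l1 := step_le h1 h4 hE2s hs hn hz hζ hee hdd hx₀ hy₀ hx₀' hy₀'
          hσv hτv hc hmz hc' hmζ (by linarith)
        have l2 := step_ge h1 h4 hE2s hs hn hz hζ hee hdd hx₀ hy₀ hx₀' hy₀'
          hσv hτv hc hmz hc' hmζ (by linarith)
        linarith
      have hIH := IH m hmz hmζ hge_chim (by push_cast at hbound ⊢; linarith)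
      have hE : (V₂n chi - V₂n clo) * (V₂s x₀ - V₂s y₀) -
          (V₂s chi - V₂s clo) * (V₂n x₀ - V₂n y₀) =
          (V₂n chi - V₂n m) * (V₂s x₀ - V₂s y₀) -
          (V₂s chi - V₂s m) * (V₂n x₀ - V₂n y₀) := by
        rw [hum, hwm]; ring
      rw [hE]
      exact hIH

end Chain


section Cross

variable (h1 : A1 R) (h2 : A2 R) (h4 : A4 R) (h8 : A8 R) (h9 : A9 R)
variable (hdense : OrderDense R)
variable (hE2s : Ess2 R (SEreg R)) (hE2n : Ess2 R (NWreg R))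
variable (hs : ∀ z ∈ Theta R \ SEext R, AddRep R V₁s V₂s (SEz R z))
variable (hn : ∀ z ∈ Theta R \ NWext R, AddRep R V₁n V₂n (NWz R z))

lemma d2_SE {x : X₂} (hx : x ∈ D2 R) : ∃ z ∈ Theta R \ SEext R, Ge2 R z.2 x := by
  obtain ⟨⟨a, ha⟩, -⟩ := hx
  rw [SEstar, Set.mem_iUnion₂] at ha
  obtain ⟨z, hz, hmem⟩ := ha
  exact ⟨z, hz, hmem.2⟩

lemma d2_NW {x : X₂} (hx : x ∈ D2 R) : ∃ ζ ∈ Theta R \ NWext R, Ge2 R x ζ.2 := by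
  obtain ⟨-, ⟨b, hb⟩⟩ := hx
  rw [NWstar, Set.mem_iUnion₂] at hb
  obtain ⟨ζ, hζ, hmem⟩ := hb
  exact ⟨ζ, hζ, hmem.1⟩

include h1 h2 in
lemma corner2_SE {x y : X₂} (hx : x ∈ D2 R) (hy : y ∈ D2 R) :
    ∃ z ∈ Theta R \ SEext R, Ge2 R z.2 x ∧ Ge2 R z.2 y := by
  obtain ⟨zx, hzx, cx⟩ := d2_SE hx
  obtain ⟨zy, hzy, cy⟩ := d2_SE hy
  rcases ge2_total h1 h2 zx.2 zy.2 with h | h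
  · exact ⟨zx, hzx, cx, ge2_trans h1 h cy⟩
  · exact ⟨zy, hzy, ge2_trans h1 h cx, cy⟩

include h1 h2 in
lemma corner2_NW {x y : X₂} (hx : x ∈ D2 R) (hy : y ∈ D2 R) :
    ∃ ζ ∈ Theta R \ NWext R, Ge2 R x ζ.2 ∧ Ge2 R y ζ.2 := by
  obtain ⟨ζx, hζx, cx⟩ := d2_NW hx
  obtain ⟨ζy, hζy, cy⟩ := d2_NW hy
  rcases ge2_total h1 h2 ζx.2 ζy.2 with h | h
  · exact ⟨ζy, hζy, ge2_trans h1 cx h, cy⟩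
  · exact ⟨ζx, hζx, cx, ge2_trans h1 cy h⟩

include h1 h2 h4 hE2s hE2n hs hn in
lemma ord_pair {x y : X₂} (hx : x ∈ D2 R) (hy : y ∈ D2 R) :
    (V₂s x ≤ V₂s y ↔ V₂n x ≤ V₂n y) := by
  obtain ⟨z, hz, c1, c2⟩ := corner2_SE h1 h2 hx hy
  obtain ⟨ζ, hζ, c1', c2'⟩ := corner2_NW h1 h2 hx hy
  exact ord_iff h1 h4 hE2s hE2n hs hn hz hζ c1 c2 c1' c2'

include h1 h2 h4 hE2s hE2n hs hn in
lemma ord_pair_eq {x y : X₂} (hx : x ∈ D2 R) (hy : y ∈ D2 R)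
    (h : V₂s x = V₂s y) : V₂n x = V₂n y :=
  le_antisymm ((ord_pair h1 h2 h4 hE2s hE2n hs hn hx hy).mp h.le)
    ((ord_pair h1 h2 h4 hE2s hE2n hs hn hy hx).mp h.ge)

include h1 h2 h4 hE2s hE2n hs hn in
lemma ord_pair_eq' {x y : X₂} (hx : x ∈ D2 R) (hy : y ∈ D2 R)
    (h : V₂n x = V₂n y) : V₂s x = V₂s y :=
  le_antisymm ((ord_pair h1 h2 h4 hE2s hE2n hs hn hx hy).mpr h.le)
    ((ord_pair h1 h2 h4 hE2s hE2n hs hn hy hx).mpr h.ge)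

include h1 h2 h4 hE2s hE2n hs hn in
lemma ord_pair_lt {x y : X₂} (hx : x ∈ D2 R) (hy : y ∈ D2 R)
    (h : V₂s x < V₂s y) : V₂n x < V₂n y := by
  have := (ord_pair h1 h2 h4 hE2s hE2n hs hn hy hx).mpr
  rcases lt_or_ge (V₂n x) (V₂n y) with h' | h'
  · exact h'
  · exact absurd (this h') (not_le.mpr h)

variable {z ζ : X₁ × X₂} (hz : z ∈ Theta R \ SEext R) (hζ : ζ ∈ Theta R \ NWext R)

include h1 h2 h8 hdense hs hz in
lemma dense_insert {α β : X₂}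
    (hαz : Ge2 R z.2 α) (hβz : Ge2 R z.2 β) (hαζ : Ge2 R α ζ.2)
    (h : V₂s α < V₂s β) :
    ∃ m, Ge2 R z.2 m ∧ Ge2 R m ζ.2 ∧ V₂s α < V₂s m ∧ V₂s m < V₂s β := by
  have hSP : SP R (z.1, β) (z.1, α) := by
    refine ⟨(rep_SE hs hz (ge1_refl h1 _) (ge1_refl h1 _) hβz hαz).mpr (by linarith),
      fun hcon => ?_⟩
    have := (rep_SE hs hz (ge1_refl h1 _) (ge1_refl h1 _) hαz hβz).mp hcon
    linarith
  obtain ⟨ξ, hξ1, hξ2⟩ := hdense _ _ hSP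
  obtain ⟨m, hm1, hm2⟩ := h8.1 z.1 β α ξ hξ1.1 hξ2.1
  have hSPβ : SP R (z.1, β) (z.1, m) :=
    ⟨h1.2 _ _ _ hξ1.1 hm2, fun hcon => hξ1.2 (h1.2 _ _ _ hm2 hcon)⟩
  have hSPα : SP R (z.1, m) (z.1, α) :=
    ⟨h1.2 _ _ _ hm1 hξ2.1, fun hcon => hξ2.2 (h1.2 _ _ _ hcon hm1)⟩
  have hβm : Ge2 R β m := h2.2 β m z.1 hSPβ
  have hmα : Ge2 R m α := h2.2 m α z.1 hSPα
  have hmz : Ge2 R z.2 m := ge2_trans h1 hβz hβm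
  have hmζ : Ge2 R m ζ.2 := ge2_trans h1 hmα hαζ
  refine ⟨m, hmz, hmζ, ?_, ?_⟩
  · rcases lt_or_ge (V₂s α) (V₂s m) with h' | h'
    · exact h'
    · exact absurd ((rep_SE hs hz (ge1_refl h1 _) (ge1_refl h1 _) hαz hmz).mpr
        (by linarith)) hSPα.2
  · rcases lt_or_ge (V₂s m) (V₂s β) with h' | h'
    · exact h'
    · exact absurd ((rep_SE hs hz (ge1_refl h1 _) (ge1_refl h1 _) hmz hβz).mpr
        (by linarith)) hSPβ.2

end Cross


section Main

variable (h1 : A1 R) (h2 : A2 R) (h4 : A4 R) (h8 : A8 R) (h9 : A9 R)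
variable (hdense : OrderDense R)
variable (hE2s : Ess2 R (SEreg R)) (hE2n : Ess2 R (NWreg R))
variable (hs : ∀ z ∈ Theta R \ SEext R, AddRep R V₁s V₂s (SEz R z))
variable (hn : ∀ z ∈ Theta R \ NWext R, AddRep R V₁n V₂n (NWz R z))
variable {z ζ : X₁ × X₂} (hz : z ∈ Theta R \ SEext R) (hζ : ζ ∈ Theta R \ NWext R)

include h1 h2 h4 h8 hE2s hE2n hs hn hz hζ in
lemma point_est {ee dd : X₁} {x₀ y₀ : X₂}
    (hee : Ge1 R ee z.1) (hdd : Ge1 R ζ.1 dd)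
    (hx₀ : Ge2 R z.2 x₀) (hy₀ : Ge2 R z.2 y₀)
    (hx₀' : Ge2 R x₀ ζ.2) (hy₀' : Ge2 R y₀ ζ.2)
    (hσv : V₁s ee = V₁s z.1 + (V₂s x₀ - V₂s y₀))
    (hτv : V₁n dd = V₁n ζ.1 - (V₂n x₀ - V₂n y₀))
    (hσ0 : 0 < V₂s x₀ - V₂s y₀) (hτ0 : 0 < V₂n x₀ - V₂n y₀)
    {r : X₂} (hrz : Ge2 R z.2 r) (hrζ : Ge2 R r ζ.2)
    (hrs : V₂s r = 0) (hrn : V₂n r = 0)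
    {x : X₂} (hxz : Ge2 R z.2 x) (hxζ : Ge2 R x ζ.2) :
    |V₂n x * (V₂s x₀ - V₂s y₀) - V₂s x * (V₂n x₀ - V₂n y₀)|
      ≤ (V₂s x₀ - V₂s y₀) * (V₂n x₀ - V₂n y₀) := by
  rcases lt_trichotomy (V₂s x) 0 with hsx | hsx | hsx
  · have hge : Ge2 R r x := by
      rcases ge2_total h1 h2 r x with h | h
      · exact h
      · exfalso; have := mono_u h1 hs hz h hxz hrz; linarith
    obtain ⟨k, hk⟩ := exists_nat_ge ((V₂s r - V₂s x) / (V₂s x₀ - V₂s y₀))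
    have hbd : V₂s r - V₂s x ≤ (k : ℝ) * (V₂s x₀ - V₂s y₀) := by
      rw [div_le_iff₀ hσ0] at hk; linarith
    have hch := chainlem h1 h2 h4 h8 hE2s hE2n hs hn hz hζ hee hdd hx₀ hy₀
      hx₀' hy₀' hσv hτv hσ0 hτ0 hrz hrζ k x hxz hxζ hge hbd
    rw [hrs, hrn] at hch
    have hE : (0 - V₂n x) * (V₂s x₀ - V₂s y₀) - (0 - V₂s x) * (V₂n x₀ - V₂n y₀) =
        -(V₂n x * (V₂s x₀ - V₂s y₀) - V₂s x * (V₂n x₀ - V₂n y₀)) := by ring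
    rwa [hE, abs_neg] at hch
  · have hwx : V₂n x = V₂n r :=
      ord_eq h1 h4 hE2s hE2n hs hn hz hζ hxz hrz hxζ hrζ (by rw [hsx, hrs])
    rw [hsx, hwx, hrn]
    simpa using le_of_lt (mul_pos hσ0 hτ0)
  · have hge : Ge2 R x r := by
      rcases ge2_total h1 h2 x r with h | h
      · exact h
      · exfalso; have := mono_u h1 hs hz h hrz hxz; linarith
    obtain ⟨k, hk⟩ := exists_nat_ge ((V₂s x - V₂s r) / (V₂s x₀ - V₂s y₀))
    have hbd : V₂s x - V₂s r ≤ (k : ℝ) * (V₂s x₀ - V₂s y₀) := by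
      rw [div_le_iff₀ hσ0] at hk; linarith
    have hch := chainlem h1 h2 h4 h8 hE2s hE2n hs hn hz hζ hee hdd hx₀ hy₀
      hx₀' hy₀' hσv hτv hσ0 hτ0 hxz hxζ k r hrz hrζ hge hbd
    rwa [hrs, hrn, sub_zero, sub_zero] at hch

include h1 h2 h4 h8 h9 hdense hE2s hE2n hs hn in
lemma cross {r p q : X₂} (hrs : V₂s r = 0) (hrn : V₂n r = 0)
    (hr : r ∈ D2 R) (hp : p ∈ D2 R) (hq : q ∈ D2 R) :
    V₂s p * V₂n q = V₂s q * V₂n p := by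
  by_cases hup : V₂s p = 0
  · have hwp : V₂n p = 0 := by
      rw [ord_pair_eq h1 h2 h4 hE2s hE2n hs hn hp hr (by rw [hup, hrs]), hrn]
    rw [hup, hwp]; ring
  by_cases huq : V₂s q = 0
  · have hwq : V₂n q = 0 := by
      rw [ord_pair_eq h1 h2 h4 hE2s hE2n hs hn hq hr (by rw [huq, hrs]), hrn]
    rw [huq, hwq]; ring
  obtain ⟨z', hz', cp', cq'⟩ := corner2_SE h1 h2 hp hq
  obtain ⟨zr, hzr, crr⟩ := d2_SE hr
  obtain ⟨z, hz, czp, czq, czr⟩ :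
      ∃ z ∈ Theta R \ SEext R, Ge2 R z.2 p ∧ Ge2 R z.2 q ∧ Ge2 R z.2 r := by
    rcases ge2_total h1 h2 z'.2 zr.2 with h | h
    · exact ⟨z', hz', cp', cq', ge2_trans h1 h crr⟩
    · exact ⟨zr, hzr, ge2_trans h1 h cp', ge2_trans h1 h cq', crr⟩
  obtain ⟨ζ', hζ', dp', dq'⟩ := corner2_NW h1 h2 hp hq
  obtain ⟨ζr, hζr, drr⟩ := d2_NW hr
  obtain ⟨ζ, hζ, dzp, dzq, dzr⟩ :
      ∃ ζ ∈ Theta R \ NWext R, Ge2 R p ζ.2 ∧ Ge2 R q ζ.2 ∧ Ge2 R r ζ.2 := by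
    rcases ge2_total h1 h2 ζ'.2 ζr.2 with h | h
    · exact ⟨ζr, hζr, ge2_trans h1 dp' h, ge2_trans h1 dq' h, drr⟩
    · exact ⟨ζ', hζ', dp', dq', ge2_trans h1 drr h⟩
  obtain ⟨e, hge, hev⟩ := live_SE h1 h2 h9 hs hz
  obtain ⟨e', hge', hev'⟩ := live_NW h1 h2 h9 hn hζ
  have key : ∀ ε : ℝ, 0 < ε → |V₂s p * V₂n q - V₂s q * V₂n p| ≤ ε := by
    intro ε hε
    obtain ⟨bot, top, hbz, hbζ, htz, htζ, hbt⟩ :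
        ∃ bot top : X₂, Ge2 R z.2 bot ∧ Ge2 R bot ζ.2 ∧ Ge2 R z.2 top ∧
          Ge2 R top ζ.2 ∧ V₂s bot < V₂s top := by
      rcases lt_or_gt_of_ne hup with h | h
      · exact ⟨p, r, czp, dzp, czr, dzr, by rw [hrs]; exact h⟩
      · exact ⟨r, p, czr, dzr, czp, dzp, by rw [hrs]; exact h⟩
    have hwbt : V₂n bot < V₂n top :=
      ord_lt h1 h4 hE2s hE2n hs hn hz hζ hbz htz hbζ htζ hbt
    set A := V₂s top - V₂s bot with hA
    set B := V₂n top - V₂n bot with hB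
    have hApos : 0 < A := sub_pos.mpr hbt
    have hBpos : 0 < B := sub_pos.mpr hwbt
    set C := |V₂s p| + |V₂s q| with hC
    have hCpos : 0 < C := by
      have h1' := abs_pos.mpr hup
      have h2' := abs_nonneg (V₂s q)
      rw [hC]; linarith
    set s := V₁s e - V₁s z.1 with hsv
    set s' := V₁n ζ.1 - V₁n e' with hs'v
    have hspos : 0 < s := sub_pos.mpr hev
    have hs'pos : 0 < s' := sub_pos.mpr hev'
    obtain ⟨N, hN⟩ := exists_nat_gt (max (2*A/s) (max (2*B/s') (2*B*C/ε)))
    have hN0 : 0 < (N : ℝ) := by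
      have h0 : (0:ℝ) < 2*A/s := by positivity
      exact lt_of_lt_of_le h0 ((le_max_left _ _).trans hN.le)
    have hNs : 2*A/(N:ℝ) < s := by
      have h' : 2*A/s < (N:ℝ) := lt_of_le_of_lt (le_max_left _ _) hN
      rw [div_lt_iff₀ hspos] at h'
      rw [div_lt_iff₀ hN0]
      linarith
    have hNs' : 2*B/(N:ℝ) < s' := by
      have h' : 2*B/s' < (N:ℝ) :=
        lt_of_le_of_lt ((le_max_left _ _).trans (le_max_right _ _)) hN
      rw [div_lt_iff₀ hs'pos] at h'
      rw [div_lt_iff₀ hN0]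
      linarith
    have hNε : 2*B/(N:ℝ) < ε/C := by
      have h' : 2*B*C/ε < (N:ℝ) :=
        lt_of_le_of_lt ((le_max_right _ _).trans (le_max_right _ _)) hN
      rw [div_lt_iff₀ hε] at h'
      rw [div_lt_div_iff₀ hN0 hCpos]
      linarith
    have hstep : ∀ t : {x : X₂ // Ge2 R z.2 x ∧ Ge2 R x ζ.2 ∧ V₂s x < V₂s top},
        ∃ t' : {x : X₂ // Ge2 R z.2 x ∧ Ge2 R x ζ.2 ∧ V₂s x < V₂s top},
          V₂s t.1 < V₂s t'.1 := by
      rintro ⟨x, hx1, hx2, hx3⟩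
      obtain ⟨m, hm1, hm2, hm3, hm4⟩ := dense_insert h1 h2 h8 hdense hs hz
        (ζ := ζ) hx1 htz hx2 hx3
      exact ⟨⟨m, hm1, hm2, hm4⟩, hm3⟩
    choose nxt hnxt using hstep
    set f : ℕ → {x : X₂ // Ge2 R z.2 x ∧ Ge2 R x ζ.2 ∧ V₂s x < V₂s top} :=
      fun n => nxt^[n] ⟨bot, hbz, hbζ, hbt⟩ with hfdef
    have hfs : ∀ n, V₂s (f n).1 < V₂s (f (n+1)).1 := by
      intro n
      have heq : f (n+1) = nxt (f n) := by
        rw [hfdef]; exact Function.iterate_succ_apply' nxt n _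
      rw [heq]; exact hnxt (f n)
    have hwfs : ∀ n, V₂n (f n).1 < V₂n (f (n+1)).1 := fun n =>
      ord_lt h1 h4 hE2s hE2n hs hn hz hζ (f n).2.1 (f (n+1)).2.1 (f n).2.2.1
        (f (n+1)).2.2.1 (hfs n)
    have hf0 : (f 0).1 = bot := rfl
    have husum : V₂s (f N).1 - V₂s (f 0).1 < A := by
      have hlt := (f N).2.2.2
      rw [hf0, hA]; linarith
    have hwsum : V₂n (f N).1 - V₂n (f 0).1 < B := by
      have hlt : V₂n (f N).1 < V₂n top :=
        ord_lt h1 h4 hE2s hE2n hs hn hz hζ (f N).2.1 htz (f N).2.2.1 htζ (f N).2.2.2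
      rw [hf0, hB]; linarith
    obtain ⟨i, hugle, hwgle⟩ :
        ∃ i, (V₂s (f (i+1)).1 - V₂s (f i).1) ≤ 2*A/(N:ℝ) ∧
          (V₂n (f (i+1)).1 - V₂n (f i).1) ≤ 2*B/(N:ℝ) := by
      by_contra hno
      push_neg at hno
      set S := (Finset.range N).filter
        (fun j => 2*A/(N:ℝ) < V₂s (f (j+1)).1 - V₂s (f j).1) with hSdef
      set Tt := (Finset.range N).filter
        (fun j => 2*B/(N:ℝ) < V₂n (f (j+1)).1 - V₂n (f j).1) with hTdef
      have hcover : Finset.range N ⊆ S ∪ Tt := by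
        intro j hj
        rcases le_or_gt (V₂s (f (j+1)).1 - V₂s (f j).1) (2*A/(N:ℝ)) with h | h
        · exact Finset.mem_union_right _ (Finset.mem_filter.mpr ⟨hj, hno j h⟩)
        · exact Finset.mem_union_left _ (Finset.mem_filter.mpr ⟨hj, h⟩)
      have hcard : N ≤ S.card + Tt.card := by
        calc N = (Finset.range N).card := (Finset.card_range N).symm
          _ ≤ (S ∪ Tt).card := Finset.card_le_card hcover
          _ ≤ S.card + Tt.card := Finset.card_union_le _ _
      have husum' : ∑ j ∈ Finset.range N, (V₂s (f (j+1)).1 - V₂s (f j).1) < A := by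
        rw [Finset.sum_range_sub (fun j => V₂s (f j).1)]; exact husum
      have hwsum' : ∑ j ∈ Finset.range N, (V₂n (f (j+1)).1 - V₂n (f j).1) < B := by
        rw [Finset.sum_range_sub (fun j => V₂n (f j).1)]; exact hwsum
      rcases (by omega : N ≤ 2 * S.card ∨ N ≤ 2 * Tt.card) with hbig | hbig
      · have hb1 : (S.card : ℝ) * (2*A/(N:ℝ)) ≤
            ∑ j ∈ S, (V₂s (f (j+1)).1 - V₂s (f j).1) := by
          have hle := Finset.card_nsmul_le_sum S
            (fun j => V₂s (f (j+1)).1 - V₂s (f j).1) (2*A/(N:ℝ))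
            (fun j hj => le_of_lt (Finset.mem_filter.mp hj).2)
          simpa [nsmul_eq_mul] using hle
        have hb2 : ∑ j ∈ S, (V₂s (f (j+1)).1 - V₂s (f j).1)
            ≤ ∑ j ∈ Finset.range N, (V₂s (f (j+1)).1 - V₂s (f j).1) :=
          Finset.sum_le_sum_of_subset_of_nonneg (Finset.filter_subset _ _)
            (fun j _ _ => le_of_lt (sub_pos.mpr (hfs j)))
        have hcast : (N : ℝ) ≤ 2 * S.card := by exact_mod_cast hbig
        have hdiv : (0:ℝ) ≤ 2*A/(N:ℝ) := by positivity
        have hmul := mul_le_mul_of_nonneg_right hcast hdiv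
        have hNA : (N:ℝ) * (2*A/(N:ℝ)) = 2*A := by field_simp
        linarith
      · have hb1 : (Tt.card : ℝ) * (2*B/(N:ℝ)) ≤
            ∑ j ∈ Tt, (V₂n (f (j+1)).1 - V₂n (f j).1) := by
          have hle := Finset.card_nsmul_le_sum Tt
            (fun j => V₂n (f (j+1)).1 - V₂n (f j).1) (2*B/(N:ℝ))
            (fun j hj => le_of_lt (Finset.mem_filter.mp hj).2)
          simpa [nsmul_eq_mul] using hle
        have hb2 : ∑ j ∈ Tt, (V₂n (f (j+1)).1 - V₂n (f j).1)
            ≤ ∑ j ∈ Finset.range N, (V₂n (f (j+1)).1 - V₂n (f j).1) :=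
          Finset.sum_le_sum_of_subset_of_nonneg (Finset.filter_subset _ _)
            (fun j _ _ => le_of_lt (sub_pos.mpr (hwfs j)))
        have hcast : (N : ℝ) ≤ 2 * Tt.card := by exact_mod_cast hbig
        have hdiv : (0:ℝ) ≤ 2*B/(N:ℝ) := by positivity
        have hmul := mul_le_mul_of_nonneg_right hcast hdiv
        have hNB : (N:ℝ) * (2*B/(N:ℝ)) = 2*B := by field_simp
        linarith
    have hσ0 : 0 < V₂s (f (i+1)).1 - V₂s (f i).1 := sub_pos.mpr (hfs i)
    have hτ0 : 0 < V₂n (f (i+1)).1 - V₂n (f i).1 := sub_pos.mpr (hwfs i)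
    obtain ⟨ee, heeg, heev⟩ := realize_SE h1 h2 h8 hs hz hge (f (i+1)).2.1
      (f i).2.1 hσ0 (by rw [← hsv]; exact hugle.trans hNs.le)
    obtain ⟨dd, hddg, hddv⟩ := realize_NW h1 h2 h8 hn hζ hge' (f (i+1)).2.2.1
      (f i).2.2.1 hτ0 (by rw [← hs'v]; exact hwgle.trans hNs'.le)
    have estp := point_est h1 h2 h4 h8 hE2s hE2n hs hn hz hζ heeg hddg
      (f (i+1)).2.1 (f i).2.1 (f (i+1)).2.2.1 (f i).2.2.1 heev hddv hσ0 hτ0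
      czr dzr hrs hrn czp dzp
    have estq := point_est h1 h2 h4 h8 hE2s hE2n hs hn hz hζ heeg hddg
      (f (i+1)).2.1 (f i).2.1 (f (i+1)).2.2.1 (f i).2.2.1 heev hddv hσ0 hτ0
      czr dzr hrs hrn czq dzq
    set σ := V₂s (f (i+1)).1 - V₂s (f i).1 with hσdef
    set τ := V₂n (f (i+1)).1 - V₂n (f i).1 with hτdef
    have hXσ : |V₂s p * V₂n q - V₂s q * V₂n p| * σ ≤ σ * τ * C := by
      have hEq : (V₂s p * V₂n q - V₂s q * V₂n p) * σ =
          V₂s p * (V₂n q * σ - V₂s q * τ) - V₂s q * (V₂n p * σ - V₂s p * τ) := by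
        ring
      calc |V₂s p * V₂n q - V₂s q * V₂n p| * σ
          = |(V₂s p * V₂n q - V₂s q * V₂n p) * σ| := by
            rw [abs_mul, abs_of_pos hσ0]
        _ = |V₂s p * (V₂n q * σ - V₂s q * τ) - V₂s q * (V₂n p * σ - V₂s p * τ)| := by
            rw [hEq]
        _ ≤ |V₂s p * (V₂n q * σ - V₂s q * τ)| + |V₂s q * (V₂n p * σ - V₂s p * τ)| :=
            abs_sub _ _
        _ = |V₂s p| * |V₂n q * σ - V₂s q * τ| + |V₂s q| * |V₂n p * σ - V₂s p * τ| := by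
            rw [abs_mul, abs_mul]
        _ ≤ |V₂s p| * (σ * τ) + |V₂s q| * (σ * τ) :=
            add_le_add (mul_le_mul_of_nonneg_left estq (abs_nonneg _))
              (mul_le_mul_of_nonneg_left estp (abs_nonneg _))
        _ = σ * τ * C := by rw [hC]; ring
    have hXτ : |V₂s p * V₂n q - V₂s q * V₂n p| ≤ τ * C := by
      have h' : |V₂s p * V₂n q - V₂s q * V₂n p| * σ ≤ (τ * C) * σ := by
        calc |V₂s p * V₂n q - V₂s q * V₂n p| * σ ≤ σ * τ * C := hXσ
          _ = (τ * C) * σ := by ring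
      exact le_of_mul_le_mul_right h' hσ0
    have hfin : τ * C < ε := by
      have h1' : τ * C ≤ (2*B/(N:ℝ)) * C :=
        mul_le_mul_of_nonneg_right hwgle (le_of_lt hCpos)
      have h2' : (2*B/(N:ℝ)) * C < (ε/C) * C :=
        mul_lt_mul_of_pos_right hNε hCpos
      have h3' : (ε/C) * C = ε := div_mul_cancel₀ ε (ne_of_gt hCpos)
      exact lt_of_le_of_lt h1' (h2'.trans_eq h3')
    exact hXτ.trans hfin.le
  by_contra hne
  have habs : 0 < |V₂s p * V₂n q - V₂s q * V₂n p| := abs_pos.mpr (sub_ne_zero.mpr hne)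
  have hk := key (|V₂s p * V₂n q - V₂s q * V₂n p| / 2) (by linarith)
  linarith

end Main

end AlignAux
/-- Proportionality of the second-coordinate value functions of the SE and NW
representations. -/
theorem align_second_value_functions {X₁ X₂ : Type*} [Nonempty X₁] [Nonempty X₂]
    (R : X₁ × X₂ → X₁ × X₂ → Prop)
    (h1 : A1 R) (h2 : A2 R) (h3 : A3 R) (h4 : A4 R) (h8 : A8 R) (h9 : A9 R)
    (hdense : OrderDense R)
    (hE1s : Ess1 R (SEreg R)) (hE2s : Ess2 R (SEreg R))
    (hE1n : Ess1 R (NWreg R)) (hE2n : Ess2 R (NWreg R))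
    (V₁s : X₁ → ℝ) (V₂s : X₂ → ℝ) (V₁n : X₁ → ℝ) (V₂n : X₂ → ℝ)
    (hs : ∀ z ∈ Theta R \ SEext R, AddRep R V₁s V₂s (SEz R z))
    (hn : ∀ z ∈ Theta R \ NWext R, AddRep R V₁n V₂n (NWz R z))
    (heq : ∀ a ∈ D1 R, V₁s a = V₁n a)
    (hnonconst : ∃ a ∈ D1 R, ∃ b ∈ D1 R, V₁s a ≠ V₁s b)
    (r : X₂) (hr : r ∈ D2 R) (hrs : V₂s r = 0) (hrn : V₂n r = 0) :
    ∃ lam : ℝ, 0 < lam ∧ ∀ p ∈ D2 R, V₂s p = lam * V₂n p := by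
  classical
  by_cases hall : ∀ p ∈ D2 R, V₂s p = 0
  · refine ⟨1, one_pos, fun p hp => ?_⟩
    have hup := hall p hp
    have hwp : V₂n p = 0 := by
      rw [AlignAux.ord_pair_eq h1 h2 h4 hE2s hE2n hs hn hp hr (by rw [hup, hrs]), hrn]
    rw [hup, hwp, mul_zero]
  · push_neg at hall
    obtain ⟨p₀, hp₀, hup₀⟩ := hall
    have hwp₀ : V₂n p₀ ≠ 0 := by
      intro h0
      exact hup₀ (by
        rw [AlignAux.ord_pair_eq' h1 h2 h4 hE2s hE2n hs hn hp₀ hr (by rw [h0, hrn]), hrs])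
    refine ⟨V₂s p₀ / V₂n p₀, ?_, fun p hp => ?_⟩
    · rcases lt_or_gt_of_ne hup₀ with h | h
      · have hneg : V₂n p₀ < 0 := by
          have hlt := AlignAux.ord_pair_lt h1 h2 h4 hE2s hE2n hs hn hp₀ hr
            (by rw [hrs]; exact h)
          rwa [hrn] at hlt
        exact div_pos_of_neg_of_neg h hneg
      · have hpos : 0 < V₂n p₀ := by
          have hlt := AlignAux.ord_pair_lt h1 h2 h4 hE2s hE2n hs hn hr hp₀
            (by rw [hrs]; exact h)
          rwa [hrn] at hlt
        exact div_pos h hpos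
    · have hc := AlignAux.cross h1 h2 h4 h8 h9 hdense hE2s hE2n hs hn hrs hrn hr hp hp₀
      field_simp
      linarith [hc]
end

section
/- Suppose ≽ satisfies A1 (weak order), weak separability (A2), and A3, both coordinates are essential on SE, and V₁ : X₁ → ℝ, V₂ : X₂ → ℝ additively represent ≽ on SE(z) for every z ∈ Θ \ SE_ext. Let SE* = ⋃_{z ∈ Θ \ SE_ext} SE(z). If there exists a maximal element M₁ ∈ X₁, then V₁ is bounded above on {a ∈ X₁ : ∃p ∈ X₂, ap ∈ SE*}, i.e. there exists B ∈ ℝ with V₁(a) ≤ B for every such a; and if there exists a minimal element m₂ ∈ X₂, then V₂ is bounded below on {p ∈ X₂ : ∃a ∈ X₁, ap ∈ SE*}. -/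
open Set
open scoped Classical

/-- Boundedness of the value functions in the presence of maximal/minimal elements. -/
theorem value_functions_bounded {X₁ X₂ : Type*} [Nonempty X₁] [Nonempty X₂]
    (R : X₁ × X₂ → X₁ × X₂ → Prop)
    (h1 : A1 R) (h2 : A2 R) (h3 : A3 R)
    (hE1 : Ess1 R (SEreg R)) (hE2 : Ess2 R (SEreg R))
    (V₁ : X₁ → ℝ) (V₂ : X₂ → ℝ)
    (hrep : ∀ z ∈ Theta R \ SEext R, AddRep R V₁ V₂ (SEz R z)) :
    ((∃ M₁ : X₁, Max1 R M₁) →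
      ∃ B : ℝ, ∀ a : X₁, (∃ p : X₂, (a,p) ∈ SEstar R) → V₁ a ≤ B) ∧
    ((∃ m₂ : X₂, Min2 R m₂) →
      ∃ B : ℝ, ∀ p : X₂, (∃ a : X₁, (a,p) ∈ SEstar R) → B ≤ V₂ p) := by
  constructor
  · rintro ⟨M₁, hM⟩
    refine ⟨V₁ M₁, ?_⟩
    rintro a ⟨p, hp⟩
    simp only [SEstar, Set.mem_iUnion] at hp
    obtain ⟨z, hz, hap⟩ := hp
    have hMp : (M₁, p) ∈ SEz R z := ⟨fun q => hM z.1 q, hap.2⟩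
    have hR : R (M₁, p) (a, p) := hM a p
    have := (hrep z hz _ hMp _ hap).mp hR
    simpa using this
  · rintro ⟨m₂, hm⟩
    refine ⟨V₂ m₂, ?_⟩
    rintro p ⟨a, hp⟩
    simp only [SEstar, Set.mem_iUnion] at hp
    obtain ⟨z, hz, hap⟩ := hp
    have ham : (a, m₂) ∈ SEz R z := ⟨hap.1, fun b => hm z.2 b⟩
    have hR : R (a, p) (a, m₂) := hm p a
    have := (hrep z hz _ hap _ ham).mp hR
    simpa using this
end

section
/- (Necessity of axiom A4.) Let ν be a capacity on {1,2} with ν({2}) < 1, let f₁ : X₁ → ℝ and f₂ : X₂ → ℝ, and let ≽ be the relation on X = X₁ × X₂ represented by ν together with (f₁,f₂). Let a,b,c,d ∈ X₁ and p,q,r,s ∈ X₂ be such that f₂(p) ≥ f₁(a), f₂(q) ≥ f₁(b), f₂(p) ≥ f₁(c), f₂(q) ≥ f₁(d), and f₁(a) ≥ f₂(r), f₁(b) ≥ f₂(s), f₁(c) ≥ f₂(r), f₁(d) ≥ f₂(s). If bq ≽ ap, cp ≽ dq and ar ≽ bs, then cr ≽ ds. -/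
open Set
open scoped Classical

lemma Choq_le (c : Capacity) {t₁ t₂ : ℝ} (h : t₁ ≤ t₂) :
    Choq c t₁ t₂ = (1 - c.ν {1}) * t₁ + c.ν {1} * t₂ := by
  unfold Choq
  split_ifs with h'
  · have : t₁ = t₂ := le_antisymm h h'
    subst this; ring
  · rfl

lemma Choq_ge (c : Capacity) {t₁ t₂ : ℝ} (h : t₂ ≤ t₁) :
    Choq c t₁ t₂ = c.ν {0} * t₁ + (1 - c.ν {0}) * t₂ := by
  unfold Choq
  rw [if_pos h]

/-- Necessity of axiom A4 for the Choquet representation. -/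
theorem A4_necessary {X₁ X₂ : Type*} [Nonempty X₁] [Nonempty X₂]
    (m : Capacity) (hm : m.ν {1} < 1)
    (f₁ : X₁ → ℝ) (f₂ : X₂ → ℝ)
    (R : X₁ × X₂ → X₁ × X₂ → Prop) (hrep : Represents m f₁ f₂ R)
    (a b c d : X₁) (p q r s : X₂)
    (hap : f₁ a ≤ f₂ p) (hbq : f₁ b ≤ f₂ q) (hcp : f₁ c ≤ f₂ p) (hdq : f₁ d ≤ f₂ q)
    (har : f₂ r ≤ f₁ a) (hbs : f₂ s ≤ f₁ b) (hcr : f₂ r ≤ f₁ c) (hds : f₂ s ≤ f₁ d)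
    (H1 : R (b,q) (a,p)) (H2 : R (c,p) (d,q)) (H3 : R (a,r) (b,s)) :
    R (c,r) (d,s) := by
  have hμ : 0 ≤ m.ν {0} := by
    have := m.mono' ∅ {0} (Set.empty_subset _)
    simpa [m.empty'] using this
  rw [hrep] at H1 H2 H3 ⊢
  simp only at H1 H2 H3 ⊢
  rw [Choq_le m hap, Choq_le m hbq] at H1
  rw [Choq_le m hcp, Choq_le m hdq] at H2
  rw [Choq_ge m har, Choq_ge m hbs] at H3
  rw [Choq_ge m hcr, Choq_ge m hds]
  have hlam : 0 < 1 - m.ν {1} := by linarith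
  have key : f₁ a + f₁ d ≤ f₁ b + f₁ c := by
    nlinarith [H1, H2, hlam]
  nlinarith [mul_le_mul_of_nonneg_left key hμ, H3]
end
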